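/- arXiv:2510.10227 — 6 statements merged into one kernel-verified Lean document; each statement's English description precedes it below -/
import Mathlib

section
/- If G is an s-parallel-greedy graph (s ≥ 2) with matching decomposition M_1, M_2, ..., and C is a cycle in G with at most s+1 edges, then the highest-indexed matching M_i containing an edge of C contains at least two edges of C. -/
open SimpleGraph

/-- `M` is a decomposition of `G` into an ordered sequence of matchings witnessing that
`G` is `s`-parallel-greedy: the matchings are edge-disjoint, cover all edges of `G`,
and every edge `{u,v} ∈ M i` has distance strictly greater than `s` in the union of the
earlier matchings (with unit edge lengths, i.e. every walk has more than `s` edges). -/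
def IsParallelGreedy {V : Type*} (G : SimpleGraph V) (s k : ℕ)
    (M : Fin k → SimpleGraph V) : Prop :=
  (∀ i, M i ≤ G) ∧
  (∀ e ∈ G.edgeSet, ∃ i, e ∈ (M i).edgeSet) ∧
  (Pairwise fun i j => Disjoint (M i).edgeSet (M j).edgeSet) ∧
  (∀ i, ∀ v u w : V, (M i).Adj v u → (M i).Adj v w → u = w) ∧
  (∀ i : Fin k, ∀ u v : V, (M i).Adj u v →
    ∀ p : (⨆ j : {j : Fin k // j < i}, M j.1).Walk u v, s < p.length)

/-- Helper: from a closed trail through `s(a,b)`, extract a walk from `a` to `b`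
avoiding `s(a,b)`, of length at most the length of the closed walk minus one. -/
lemma exists_walk_avoiding {V : Type*} {G : SimpleGraph V} {a b : V}
    (q : G.Walk a a) (hq : q.edges.Nodup) (he : s(a, b) ∈ q.edges) :
    ∃ w : G.Walk a b, (∀ f ∈ w.edges, f ∈ q.edges) ∧ s(a, b) ∉ w.edges ∧
      w.length + 1 ≤ q.length := by
  classical
  have hb : b ∈ q.support := q.snd_mem_support_of_mem_edges he
  set t := q.takeUntil b hb with ht
  set d := q.dropUntil b hb with hd
  have hspec : t.append d = q := q.take_spec hb
  have hlen : t.length + d.length = q.length := by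
    rw [← hspec, SimpleGraph.Walk.length_append]
  have hedges : q.edges = t.edges ++ d.edges := by
    rw [← hspec, SimpleGraph.Walk.edges_append]
  have hmem : s(a, b) ∈ t.edges ∨ s(a, b) ∈ d.edges := by
    rw [hedges] at he; exact List.mem_append.mp he
  have hnd : t.edges.Nodup ∧ d.edges.Nodup ∧ ∀ f ∈ t.edges, f ∉ d.edges := by
    rw [hedges] at hq
    exact ⟨hq.of_append_left, hq.of_append_right,
      fun f hf => (List.disjoint_of_nodup_append hq) hf⟩
  rcases hmem with hmem | hmem
  · -- use d.reverse : Walk a b  (d : Walk b a)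
    refine ⟨d.reverse, ?_, ?_, ?_⟩
    · intro f hf
      rw [SimpleGraph.Walk.edges_reverse, List.mem_reverse] at hf
      rw [hedges]; exact List.mem_append.mpr (Or.inr hf)
    · rw [SimpleGraph.Walk.edges_reverse, List.mem_reverse]
      exact hnd.2.2 _ hmem
    · have : 1 ≤ t.length := by
        by_contra h
        push_neg at h
        interval_cases h' : t.length
        · have : t.edges = [] := by
            have := SimpleGraph.Walk.length_edges t
            rw [h'] at this
            exact List.eq_nil_of_length_eq_zero this
          rw [this] at hmem; simp at hmem
      rw [SimpleGraph.Walk.length_reverse]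
      omega
  · -- use t : Walk a b
    refine ⟨t, ?_, ?_, ?_⟩
    · intro f hf; rw [hedges]; exact List.mem_append.mpr (Or.inl hf)
    · exact fun h => hnd.2.2 _ h hmem
    · have : 1 ≤ d.length := by
        by_contra h
        push_neg at h
        interval_cases h' : d.length
        · have : d.edges = [] := by
            have := SimpleGraph.Walk.length_edges d
            rw [h'] at this
            exact List.eq_nil_of_length_eq_zero this
          rw [this] at hmem; simp at hmem
      omega

/-- If `G` is an `s`-parallel-greedy graph (`s ≥ 2`) and `C` is a cycle of `G` with at most
`s+1` edges, then the highest-indexed matching containing an edge of `C` contains at least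
two edges of `C`. -/
theorem parallel_greedy_cycle_two_edges_in_top_matching
    {V : Type*} (G : SimpleGraph V) (s k : ℕ) (hs : 2 ≤ s)
    (M : Fin k → SimpleGraph V) (hPG : IsParallelGreedy G s k M)
    {u : V} (p : G.Walk u u) (hcyc : p.IsCycle) (hlen : p.length ≤ s + 1)
    (i : Fin k) (hi : ∃ e ∈ p.edges, e ∈ (M i).edgeSet)
    (hmax : ∀ j : Fin k, (∃ e ∈ p.edges, e ∈ (M j).edgeSet) → j ≤ i) :
    ∃ e₁ e₂ : Sym2 V, e₁ ≠ e₂ ∧ e₁ ∈ p.edges ∧ e₂ ∈ p.edges ∧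
      e₁ ∈ (M i).edgeSet ∧ e₂ ∈ (M i).edgeSet := by
  obtain ⟨hle, hcover, hdisj, hmatch, hgreedy⟩ := hPG
  by_contra hcon
  push_neg at hcon
  obtain ⟨e, hep, hei⟩ := hi
  -- any edge of p in M i equals e
  have huniq : ∀ f ∈ p.edges, f ∈ (M i).edgeSet → f = e := by
    intro f hf hfi
    by_contra hne
    exact hcon f e hne hf hep hfi hei
  classical
  induction e using Sym2.ind with
  | _ a b =>
  have ha : a ∈ p.support := p.fst_mem_support_of_mem_edges hep
  -- rotate the cycle to start at a
  set q := p.rotate a ha with hqdef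
  have hqcyc : q.IsCycle := hcyc.rotate ha
  have hqe : ∀ f, f ∈ q.edges ↔ f ∈ p.edges := fun f =>
    (p.rotate_edges a ha).mem_iff
  have hqlen : q.length = p.length := by
    have h1 := (p.rotate_edges a ha).perm.length_eq
    rw [SimpleGraph.Walk.length_edges, SimpleGraph.Walk.length_edges] at h1
    exact h1
  obtain ⟨w, hw1, hw2, hw3⟩ := exists_walk_avoiding q hqcyc.isTrail.edges_nodup
    ((hqe _).mpr hep)
  -- every edge of w lies in some matching with index < i
  have hwlt : ∀ f ∈ w.edges, f ∈ (⨆ j : {j : Fin k // j < i}, M j.1).edgeSet := by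
    intro f hf
    have hfG : f ∈ G.edgeSet := w.edges_subset_edgeSet hf
    obtain ⟨j, hj⟩ := hcover f hfG
    have hfp : f ∈ p.edges := (hqe f).mp (hw1 f hf)
    have hji : j ≤ i := hmax j ⟨f, hfp, hj⟩
    have hjne : j ≠ i := by
      rintro rfl
      exact hw2 (huniq f hfp hj ▸ hf)
    have hjlt : j < i := lt_of_le_of_ne hji hjne
    have : M j ≤ ⨆ j : {j : Fin k // j < i}, M j.1 :=
      le_iSup (fun j : {j : Fin k // j < i} => M j.1) ⟨j, hjlt⟩
    exact SimpleGraph.edgeSet_mono this hj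
  -- transfer the walk and contradict the greedy condition
  have hadj : (M i).Adj a b := hei
  have := hgreedy i a b hadj (w.transfer _ hwlt)
  rw [SimpleGraph.Walk.length_transfer] at this
  omega
end

section
/- In an s-parallel-greedy graph G with s even, for any two vertices u, v there is at most one monotonic path from u to v consisting of exactly s/2 edges. -/
open SimpleGraph

lemma forall₂_mem_left' {α β : Type*} {R : α → β → Prop} :
    ∀ {l₁ : List α} {l₂ : List β}, List.Forall₂ R l₁ l₂ → ∀ {a}, a ∈ l₁ → ∃ b ∈ l₂, R a b := by
  intro l₁ l₂ h
  induction h with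
  | nil => simp
  | cons hr _ ih =>
    intro a ha
    rcases List.mem_cons.mp ha with rfl | ha
    · exact ⟨_, List.mem_cons_self, hr⟩
    · obtain ⟨b, hb, hrb⟩ := ih ha
      exact ⟨b, List.mem_cons_of_mem _ hb, hrb⟩

lemma chain'_gt_head' {k : ℕ} :
    ∀ {l : List (Fin k)} {i : Fin k}, (i :: l).Chain' (· > ·) → ∀ x ∈ l, x < i := by
  intro l
  induction l with
  | nil => simp
  | cons a t ih =>
    intro i h x hx
    have h1 : a < i := (List.isChain_cons_cons.mp h).1
    rcases List.mem_cons.mp hx with rfl | hx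
    · exact h1
    · exact lt_trans (ih (List.isChain_cons_cons.mp h).2 x hx) h1

lemma no_short' {V : Type*} {G : SimpleGraph V} {s k : ℕ} {M : Fin k → SimpleGraph V}
    (hPG : IsParallelGreedy G s k M) {i : Fin k} {a b : V}
    (hadj : (M i).Adj a b) (r : G.Walk a b) (hlen : r.length ≤ s)
    (hedges : ∀ e ∈ r.edges, ∃ j, j < i ∧ e ∈ (M j).edgeSet) : False := by
  have hsub : ∀ e ∈ r.edges, e ∈ (⨆ j : {j : Fin k // j < i}, M j.1).edgeSet := by
    intro e he
    obtain ⟨j, hj, hmem⟩ := hedges e he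
    exact (SimpleGraph.edgeSet_mono
      (le_iSup (fun j : {j : Fin k // j < i} => M j.1) ⟨j, hj⟩)) hmem
  have := hPG.2.2.2.2 i a b hadj (r.transfer _ hsub)
  rw [SimpleGraph.Walk.length_transfer] at this
  omega

lemma key' {V : Type*} {G : SimpleGraph V} {s k : ℕ} {M : Fin k → SimpleGraph V}
    (hPG : IsParallelGreedy G s k M) {v : V} :
    ∀ (lp : List (Fin k)) (u : V) (p q : G.Walk u v) (lq : List (Fin k)),
      p.length + q.length ≤ s + 1 →
      lp.Chain' (· > ·) → List.Forall₂ (fun e i => e ∈ (M i).edgeSet) p.edges lp →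
      lq.Chain' (· > ·) → List.Forall₂ (fun e i => e ∈ (M i).edgeSet) q.edges lq →
      p = q := by
  intro lp
  induction lp with
  | nil =>
    intro u p q lq hsum _ hfp hcq hfq
    have hpnil : p.edges = [] := List.forall₂_nil_right_iff.mp hfp
    cases p with
    | nil =>
      cases q with
      | nil => rfl
      | cons h' q' =>
        exfalso
        rw [SimpleGraph.Walk.edges_cons] at hfq
        rcases List.forall₂_cons_left_iff.mp hfq with ⟨j, lq', hj, hfq', rfl⟩
        refine no_short' hPG (((M j).mem_edgeSet).mp hj) q'.reverse ?_ ?_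
        · simp only [SimpleGraph.Walk.length_reverse]
          simp only [SimpleGraph.Walk.length_nil, SimpleGraph.Walk.length_cons] at hsum
          omega
        · intro e he
          rw [SimpleGraph.Walk.edges_reverse, List.mem_reverse] at he
          obtain ⟨b, hb, hrb⟩ := forall₂_mem_left' hfq' he
          exact ⟨b, chain'_gt_head' hcq b hb, hrb⟩
    | cons h p' => simp at hpnil
  | cons i lp' ih =>
    intro u p q lq hsum hcp hfp hcq hfq
    cases p with
    | nil => simp [List.forall₂_nil_left_iff] at hfp
    | cons h p' =>
      rename_i w
      rw [SimpleGraph.Walk.edges_cons] at hfp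
      obtain ⟨hi, hfp'⟩ := List.forall₂_cons.mp hfp
      have hadj_p : (M i).Adj u w := ((M i).mem_edgeSet).mp hi
      cases q with
      | nil =>
        exfalso
        refine no_short' hPG hadj_p p'.reverse ?_ ?_
        · simp only [SimpleGraph.Walk.length_reverse]
          simp only [SimpleGraph.Walk.length_cons, SimpleGraph.Walk.length_nil] at hsum
          omega
        · intro e he
          rw [SimpleGraph.Walk.edges_reverse, List.mem_reverse] at he
          obtain ⟨b, hb, hrb⟩ := forall₂_mem_left' hfp' he
          exact ⟨b, chain'_gt_head' hcp b hb, hrb⟩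
      | cons h' q' =>
        rename_i w'
        rw [SimpleGraph.Walk.edges_cons] at hfq
        rcases List.forall₂_cons_left_iff.mp hfq with ⟨i', lq', hi', hfq', rfl⟩
        have hadj_q : (M i').Adj u w' := ((M i').mem_edgeSet).mp hi'
        rcases lt_trichotomy i i' with hlt | heq | hgt
        · -- i < i' : contradiction using edge (u,w') of M i'
          exfalso
          refine no_short' hPG hadj_q ((SimpleGraph.Walk.cons h p').append q'.reverse) ?_ ?_
          · simp only [SimpleGraph.Walk.length_append, SimpleGraph.Walk.length_reverse,
              SimpleGraph.Walk.length_cons] at hsum ⊢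
            omega
          · intro e he
            rw [SimpleGraph.Walk.edges_append, List.mem_append,
              SimpleGraph.Walk.edges_reverse, List.mem_reverse] at he
            rcases he with he | he
            · obtain ⟨b, hb, hrb⟩ := forall₂_mem_left' hfp he
              rcases List.mem_cons.mp hb with rfl | hb
              · exact ⟨b, hlt, hrb⟩
              · exact ⟨b, lt_trans (chain'_gt_head' hcp b hb) hlt, hrb⟩
            · obtain ⟨b, hb, hrb⟩ := forall₂_mem_left' hfq' he
              exact ⟨b, chain'_gt_head' hcq b hb, hrb⟩
        · -- i = i' : same matching, so w = w', strip and recurse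
          subst heq
          have hww : w = w' := hPG.2.2.2.1 i u w w' hadj_p hadj_q
          subst hww
          have : p' = q' := by
            refine ih w p' q' lq' ?_ hcp.tail hfp' hcq.tail hfq'
            simp only [SimpleGraph.Walk.length_cons] at hsum
            omega
          rw [this]
        · -- i' < i : contradiction using edge (u,w) of M i
          exfalso
          refine no_short' hPG hadj_p ((SimpleGraph.Walk.cons h' q').append p'.reverse) ?_ ?_
          · simp only [SimpleGraph.Walk.length_append, SimpleGraph.Walk.length_reverse,
              SimpleGraph.Walk.length_cons] at hsum ⊢
            omega
          · intro e he
            rw [SimpleGraph.Walk.edges_append, List.mem_append,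
              SimpleGraph.Walk.edges_reverse, List.mem_reverse] at he
            rcases he with he | he
            · obtain ⟨b, hb, hrb⟩ := forall₂_mem_left' hfq he
              rcases List.mem_cons.mp hb with rfl | hb
              · exact ⟨b, hgt, hrb⟩
              · exact ⟨b, lt_trans (chain'_gt_head' hcq b hb) hgt, hrb⟩
            · obtain ⟨b, hb, hrb⟩ := forall₂_mem_left' hfp' he
              exact ⟨b, chain'_gt_head' hcp b hb, hrb⟩


/-- A walk is monotonic (w.r.t. the matchings `M`) if its edges can be assigned
strictly increasing matching indices, each edge belonging to its assigned matching. -/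
def IsMonotonic {V : Type*} {G : SimpleGraph V} {k : ℕ} (M : Fin k → SimpleGraph V)
    {u v : V} (p : G.Walk u v) : Prop :=
  ∃ l : List (Fin k), l.Chain' (· < ·) ∧
    List.Forall₂ (fun e i => e ∈ (M i).edgeSet) p.edges l

/-- Dispersion lemma: in an `s`-parallel-greedy graph with `s` even, for any two vertices
`u, v` there is at most one monotonic path from `u` to `v` with exactly `s/2` edges. -/
theorem monotonic_path_unique
    {V : Type*} (G : SimpleGraph V) (s k : ℕ) (hs : 2 ≤ s) (hse : Even s)
    (M : Fin k → SimpleGraph V) (hPG : IsParallelGreedy G s k M)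
    (u v : V) (p q : G.Walk u v) (hp : p.IsPath) (hq : q.IsPath)
    (hpl : p.length = s / 2) (hql : q.length = s / 2)
    (hpm : IsMonotonic M p) (hqm : IsMonotonic M q) : p = q := by
  obtain ⟨lp, hcp, hfp⟩ := hpm
  obtain ⟨lq, hcq, hfq⟩ := hqm
  have hrev : p.reverse = q.reverse := by
    refine key' hPG lp.reverse v p.reverse q.reverse lq.reverse ?_ ?_ ?_ ?_ ?_
    · rw [SimpleGraph.Walk.length_reverse, SimpleGraph.Walk.length_reverse, hpl, hql]
      omega
    · exact List.isChain_reverse.mpr hcp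
    · rw [SimpleGraph.Walk.edges_reverse]
      exact List.forall₂_reverse_iff.mpr hfp
    · exact List.isChain_reverse.mpr hcq
    · rw [SimpleGraph.Walk.edges_reverse]
      exact List.forall₂_reverse_iff.mpr hfq
  have := congrArg SimpleGraph.Walk.reverse hrev
  rwa [SimpleGraph.Walk.reverse_reverse, SimpleGraph.Walk.reverse_reverse] at this
end

section
/- If an s-parallel-greedy graph G on n vertices has at least sn/2 edges (s even), then G contains at least sn/4 monotonic paths with exactly s/2 edges. -/
open SimpleGraph


open SimpleGraph

section Aux
variable {V : Type*} [DecidableEq V] {G : SimpleGraph V} {k s : ℕ} {M : Fin k → SimpleGraph V}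

lemma forall2_split {α β : Type*} {R : α → β → Prop} {a b : List α} {c : List β}
    (h : List.Forall₂ R (a ++ b) c) :
    List.Forall₂ R a (c.take a.length) ∧ List.Forall₂ R b (c.drop a.length) := by
  constructor
  · have := List.forall₂_take a.length h
    rwa [List.take_left] at this
  · have := List.forall₂_drop a.length h
    rwa [List.drop_left] at this

lemma forall2_mem {α β : Type*} {R : α → β → Prop} {as : List α} {bs : List β} {a : α}
    (h : List.Forall₂ R as bs) (ha : a ∈ as) : ∃ b ∈ bs, R a b := by
  induction h with
  | nil => simp at ha
  | cons hR hF ih =>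
    rcases List.mem_cons.mp ha with rfl | ha
    · exact ⟨_, List.mem_cons_self, hR⟩
    · obtain ⟨b, hb, hRb⟩ := ih ha
      exact ⟨b, List.mem_cons_of_mem _ hb, hRb⟩

/-- No nontrivial short monotonic closed walk. -/
lemma closedA (hPG : IsParallelGreedy G s k M) :
    ∀ (u w : V) (c : G.Walk u w) (l : List (Fin k)), l.Chain' (· < ·) →
      List.Forall₂ (fun e j => e ∈ (M j).edgeSet) c.edges l →
      c.length ≤ s + 1 → u = w → c.length = 0 := by
  intro u w c l hchain hf2 hlen huw
  subst huw
  cases hrev : c.reverse with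
  | nil =>
    have : c.reverse.length = 0 := by rw [hrev]; rfl
    rwa [SimpleGraph.Walk.length_reverse] at this
  | cons h' q' =>
    exfalso
    rename_i x
    -- h' : G.Adj u x, q' : G.Walk x u
    have hc : c = q'.reverse.concat h'.symm := by
      have h2 := congrArg SimpleGraph.Walk.reverse hrev
      rw [SimpleGraph.Walk.reverse_reverse] at h2
      rw [h2, SimpleGraph.Walk.reverse_cons]
      rfl
    have hedges : c.edges = q'.reverse.edges ++ [s(x, u)] := by
      rw [hc, SimpleGraph.Walk.edges_concat, List.concat_eq_append]
    rw [hedges] at hf2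
    obtain ⟨hf2a, hf2b⟩ := forall2_split hf2
    obtain ⟨j, l2, hRj, hftail, hdropeq⟩ := List.forall₂_cons_left_iff.mp hf2b
    -- hRj : s(x,u) ∈ (M j).edgeSet
    have hadj : (M j).Adj x u := hRj
    -- every index in the prefix list is < j
    have hlj : ∀ a ∈ l.take q'.reverse.edges.length, a < j := by
      have hpair : l.Pairwise (· < ·) := List.isChain_iff_pairwise.mp hchain
      have hsplit : l = l.take q'.reverse.edges.length ++ l.drop q'.reverse.edges.length :=
        (List.take_append_drop _ l).symm
      rw [hsplit, List.pairwise_append] at hpair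
      intro a ha
      exact hpair.2.2 a ha j (by rw [hdropeq]; exact List.mem_cons_self)
    -- edges of q' lie in earlier matchings
    set S := (⨆ j' : {j' : Fin k // j' < j}, M j'.1) with hS
    have hsub : ∀ e ∈ q'.edges, e ∈ S.edgeSet := by
      intro e he
      have he' : e ∈ q'.reverse.edges := by
        rw [SimpleGraph.Walk.edges_reverse, List.mem_reverse]; exact he
      obtain ⟨b, hb, hRb⟩ := forall2_mem hf2a he'
      have hble : M b ≤ S := le_iSup (fun j' : {j' : Fin k // j' < j} => M j'.1) ⟨b, hlj b hb⟩
      exact SimpleGraph.edgeSet_mono hble hRb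
    have hlong := hPG.2.2.2.2 j x u hadj (q'.transfer S hsub)
    rw [SimpleGraph.Walk.length_transfer] at hlong
    -- but q'.length ≤ s
    have : c.length = q'.length + 1 := by
      have := congrArg SimpleGraph.Walk.length hrev
      rw [SimpleGraph.Walk.length_reverse] at this
      simpa using this
    omega

/-- A short monotonic walk is a path. -/
lemma monoIsPath (hPG : IsParallelGreedy G s k M) :
    ∀ (u v : V) (p : G.Walk u v) (l : List (Fin k)), l.Chain' (· < ·) →
      List.Forall₂ (fun e j => e ∈ (M j).edgeSet) p.edges l →
      p.length ≤ s + 1 → p.IsPath := by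
  intro u v p
  induction p with
  | nil => intro l _ _ _; exact SimpleGraph.Walk.IsPath.nil
  | cons h q ih =>
    intro l hchain hf2 hlen
    rename_i a b c
    rw [SimpleGraph.Walk.edges_cons] at hf2
    obtain ⟨j, l', hRj, hftail, rfl⟩ := List.forall₂_cons_left_iff.mp hf2
    rw [SimpleGraph.Walk.cons_isPath_iff]
    refine ⟨ih l' hchain.tail hftail (by simp at hlen ⊢; omega), ?_⟩
    intro hu
    -- build a closed monotonic walk
    have hclen := SimpleGraph.Walk.length_takeUntil_le q hu
    set r := q.takeUntil a hu with hr
    have hqedges : q.edges = r.edges ++ (q.dropUntil a hu).edges := by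
      rw [← SimpleGraph.Walk.edges_append, SimpleGraph.Walk.take_spec]
    have hfr : List.Forall₂ (fun e j => e ∈ (M j).edgeSet) r.edges
        (l'.take r.edges.length) := by
      rw [hqedges] at hftail
      exact (forall2_split hftail).1
    have hchain' : (j :: l'.take r.edges.length).Chain' (· < ·) := by
      refine List.IsChain.prefix hchain ?_
      exact ⟨l'.drop r.edges.length, by simp [List.take_append_drop]⟩
    have hfc : List.Forall₂ (fun e j => e ∈ (M j).edgeSet) (SimpleGraph.Walk.cons h r).edges
        (j :: l'.take r.edges.length) := by
      rw [SimpleGraph.Walk.edges_cons]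
      exact List.Forall₂.cons hRj hfr
    have := closedA hPG a a (SimpleGraph.Walk.cons h r) (j :: l'.take r.edges.length)
      hchain' hfc (by simp at hlen ⊢; omega) rfl
    simp at this

end Aux

set_option linter.unusedSectionVars false

section Phi
variable {V : Type*} [DecidableEq V] {k s : ℕ}

/-- Monotonic walks ending at `v`, edges inside `EH`, indices `< i`, length `d`. -/
def MonoW (G : SimpleGraph V) (M : Fin k → SimpleGraph V) (EH : Set (Sym2 V))
    (i : ℕ) (v : V) (d : ℕ) : Prop :=
  ∃ (u : V) (p : G.Walk u v) (l : List (Fin k)), p.length = d ∧ l.Chain' (· < ·) ∧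
    List.Forall₂ (fun e j => e ∈ (M j).edgeSet) p.edges l ∧
    (∀ e ∈ p.edges, e ∈ EH) ∧ (∀ j ∈ l, (j : ℕ) < i)

noncomputable def phi (G : SimpleGraph V) (M : Fin k → SimpleGraph V) (EH : Set (Sym2 V))
    (t i : ℕ) (v : V) : ℕ :=
  sSup {d | d ≤ t - 1 ∧ MonoW G M EH i v d}

variable {G : SimpleGraph V} {M : Fin k → SimpleGraph V} {EH : Set (Sym2 V)} {t : ℕ}

lemma phi_set_nonempty (i : ℕ) (v : V) : {d | d ≤ t - 1 ∧ MonoW G M EH i v d}.Nonempty :=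
  ⟨0, Nat.zero_le _, v, SimpleGraph.Walk.nil, [], rfl, List.isChain_nil,
    List.Forall₂.nil, by simp, by simp⟩

lemma phi_set_bdd (i : ℕ) (v : V) : BddAbove {d | d ≤ t - 1 ∧ MonoW G M EH i v d} :=
  ⟨t - 1, fun _ hd => hd.1⟩

lemma phi_mem (i : ℕ) (v : V) :
    phi G M EH t i v ∈ {d | d ≤ t - 1 ∧ MonoW G M EH i v d} :=
  Nat.sSup_mem (phi_set_nonempty i v) (phi_set_bdd i v)

lemma phi_le (i : ℕ) (v : V) : phi G M EH t i v ≤ t - 1 := (phi_mem i v).1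

lemma phi_mono {i i' : ℕ} (h : i ≤ i') (v : V) : phi G M EH t i v ≤ phi G M EH t i' v := by
  refine le_csSup (phi_set_bdd i' v) ?_
  obtain ⟨h1, u, p, l, hl⟩ := phi_mem (EH := EH) (G := G) (M := M) (t := t) i v
  exact ⟨h1, u, p, l, hl.1, hl.2.1, hl.2.2.1, hl.2.2.2.1, fun j hj => lt_of_lt_of_le (hl.2.2.2.2 j hj) h⟩

/-- Step lemma: an edge of `M i` inside `EH` forces the potential to grow. -/
lemma phi_step (hPG : IsParallelGreedy G s k M) (ht1 : 1 ≤ t) (hts : t ≤ s + 1)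
    (hNP : ∀ (u v : V) (p : G.Walk u v), p.length = t → IsMonotonic M p →
      (∀ e ∈ p.edges, e ∈ EH) → False)
    (i : Fin k) (u v : V) (hadj : (M i).Adj v u) (he : s(v, u) ∈ EH) :
    phi G M EH t (i : ℕ) v + 1 ≤ phi G M EH t ((i : ℕ) + 1) u := by
  obtain ⟨hd, w, p, l, hplen, hchain, hf2, hin, hidx⟩ := phi_mem (EH := EH) (G := G) (M := M) (t := t) (i : ℕ) v
  set d := phi G M EH t (i : ℕ) v with hdef
  have hGadj : G.Adj v u := hPG.1 i hadj
  set p' : G.Walk w u := p.concat hGadj with hp'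
  have hp'len : p'.length = d + 1 := by rw [hp', SimpleGraph.Walk.length_concat, hplen]
  have hp'edges : p'.edges = p.edges ++ [s(v, u)] := by
    rw [hp', SimpleGraph.Walk.edges_concat, List.concat_eq_append]
  have hchain' : (l ++ [i]).Chain' (· < ·) := by
    refine List.isChain_append.mpr ?_
    refine ⟨hchain, List.isChain_singleton _, ?_⟩
    intro a ha b hb
    simp at hb
    subst hb
    have := hidx a (List.mem_of_mem_getLast? ha)
    exact Fin.lt_def.mpr this
  have hf2' : List.Forall₂ (fun e j => e ∈ (M j).edgeSet) p'.edges (l ++ [i]) := by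
    rw [hp'edges]
    exact List.rel_append hf2 (List.Forall₂.cons hadj List.Forall₂.nil)
  have hin' : ∀ e ∈ p'.edges, e ∈ EH := by
    rw [hp'edges]
    intro e heme
    rcases List.mem_append.mp heme with h1 | h1
    · exact hin e h1
    · simp at h1; subst h1; exact he
  have hidx' : ∀ j ∈ l ++ [i], (j : ℕ) < (i : ℕ) + 1 := by
    intro j hj
    rcases List.mem_append.mp hj with h1 | h1
    · exact lt_trans (hidx j h1) (Nat.lt_succ_self _)
    · simp at h1; subst h1; exact Nat.lt_succ_self _
  by_cases hcase : d + 1 ≤ t - 1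
  · exact le_csSup (phi_set_bdd _ u) ⟨hcase, w, p', l ++ [i], hp'len, hchain', hf2', hin', hidx'⟩
  · exfalso
    have hdt : d + 1 = t := by have := phi_le (EH := EH) (G := G) (M := M) (t := t) (i : ℕ) v; omega
    exact hNP w u p' (by rw [hp'len, hdt]) ⟨l ++ [i], hchain', hf2'⟩ hin'

end Phi

section Weak
variable {V : Type*} [Fintype V] [DecidableEq V] {k s : ℕ}
variable {G : SimpleGraph V} {M : Fin k → SimpleGraph V} {t : ℕ}

lemma weak_counting (hPG : IsParallelGreedy G s k M) (ht1 : 1 ≤ t) (hts : t ≤ s + 1)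
    (H : SimpleGraph V) (hHG : H ≤ G)
    (hNP : ∀ (u v : V) (p : G.Walk u v), p.length = t → IsMonotonic M p →
      (∀ e ∈ p.edges, e ∈ H.edgeSet) → False) :
    2 * H.edgeSet.ncard ≤ (t - 1) * Fintype.card V := by
  classical
  letI : DecidableRel H.Adj := Classical.decRel _
  have hNP' : ∀ (u v : V) (p : G.Walk u v), p.length = t →
      (∃ l : List (Fin k), l.Chain' (· < ·) ∧
        List.Forall₂ (fun e j => e ∈ (M j).edgeSet) p.edges l) →
      (∀ e ∈ p.edges, e ∈ H.edgeSet) → False := hNP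
  set EH := H.edgeSet with hEH
  set Φ : ℕ → V → ℕ := phi G M EH t with hΦ
  set P : Fin k → V → Prop := fun i v => ∃ u, (M i).Adj v u ∧ s(v, u) ∈ EH with hP
  set S : Fin k → Finset V := fun i => Finset.univ.filter (P i) with hSdef
  set f : Fin k → V → V := fun i v => if h : P i v then h.choose else v with hf
  have hfS : ∀ (i : Fin k) (v : V), v ∈ S i →
      (M i).Adj v (f i v) ∧ s(v, f i v) ∈ EH := by
    intro i v hv
    rw [hSdef, Finset.mem_filter] at hv
    have hPv := hv.2
    simp only [hf, dif_pos hPv]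
    exact hPv.choose_spec
  have hfmem : ∀ (i : Fin k) (v : V), v ∈ S i → f i v ∈ S i := by
    intro i v hv
    obtain ⟨h1, h2⟩ := hfS i v hv
    rw [hSdef, Finset.mem_filter]
    exact ⟨Finset.mem_univ _, v, h1.symm, by rwa [Sym2.eq_swap]⟩
  have hff : ∀ (i : Fin k) (v : V), v ∈ S i → f i (f i v) = v := by
    intro i v hv
    obtain ⟨h1, _⟩ := hfS i v hv
    obtain ⟨h2, _⟩ := hfS i (f i v) (hfmem i v hv)
    exact hPG.2.2.2.1 i (f i v) (f i (f i v)) v h2 h1.symm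
  -- the step summed over one round
  have hsum_step : ∀ i : Fin k,
      (∑ v, Φ (i : ℕ) v) + (S i).card ≤ ∑ v, Φ ((i : ℕ) + 1) v := by
    intro i
    have hsplit1 := Finset.sum_filter_add_sum_filter_not Finset.univ (P i) (Φ (i : ℕ))
    have hsplit2 := Finset.sum_filter_add_sum_filter_not Finset.univ (P i) (Φ ((i : ℕ) + 1))
    have hA : ∑ v ∈ S i, Φ (i : ℕ) (f i v) = ∑ v ∈ S i, Φ (i : ℕ) v := by
      refine Finset.sum_bij' (fun a _ => f i a) (fun b _ => f i b)
        (fun a ha => hfmem i a ha) (fun b hb => hfmem i b hb)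
        (fun a ha => hff i a ha) (fun b hb => hff i b hb) (fun a _ => rfl)
    have hB : ∀ v ∈ S i, Φ (i : ℕ) (f i v) + 1 ≤ Φ ((i : ℕ) + 1) v := by
      intro v hv
      obtain ⟨h1, h2⟩ := hfS i v hv
      exact phi_step hPG ht1 hts hNP' i v (f i v) h1.symm (by rwa [Sym2.eq_swap])
    have hC : ∑ v ∈ S i, Φ (i : ℕ) v + (S i).card ≤ ∑ v ∈ S i, Φ ((i : ℕ) + 1) v := by
      rw [← hA]
      calc (∑ v ∈ S i, Φ (i : ℕ) (f i v)) + (S i).card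
          = ∑ v ∈ S i, (Φ (i : ℕ) (f i v) + 1) := by
            rw [Finset.sum_add_distrib, Finset.sum_const, smul_eq_mul, mul_one]
        _ ≤ ∑ v ∈ S i, Φ ((i : ℕ) + 1) v := Finset.sum_le_sum hB
    have hD : ∑ v ∈ Finset.univ.filter (fun v => ¬ P i v), Φ (i : ℕ) v ≤
        ∑ v ∈ Finset.univ.filter (fun v => ¬ P i v), Φ ((i : ℕ) + 1) v :=
      Finset.sum_le_sum fun v _ => phi_mono (Nat.le_succ _) v
    calc (∑ v, Φ (i : ℕ) v) + (S i).card
        = (∑ v ∈ S i, Φ (i : ℕ) v + (S i).card) +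
            ∑ v ∈ Finset.univ.filter (fun v => ¬ P i v), Φ (i : ℕ) v := by
          rw [← hsplit1]; ring
      _ ≤ (∑ v ∈ S i, Φ ((i : ℕ) + 1) v) +
            ∑ v ∈ Finset.univ.filter (fun v => ¬ P i v), Φ ((i : ℕ) + 1) v :=
          Nat.add_le_add hC hD
      _ = ∑ v, Φ ((i : ℕ) + 1) v := hsplit2
  -- degree identity
  have hdeg : ∀ v : V, (Finset.univ.filter fun i : Fin k => P i v).card = H.degree v := by
    intro v
    rw [← SimpleGraph.card_neighborFinset_eq_degree]
    refine Finset.card_bij (fun i hi => f i v) ?_ ?_ ?_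
    · intro i hi
      rw [Finset.mem_filter] at hi
      have := hfS i v (by rw [hSdef, Finset.mem_filter]; exact ⟨Finset.mem_univ _, hi.2⟩)
      rw [SimpleGraph.mem_neighborFinset]
      exact this.2
    · intro i1 hi1 i2 hi2 heq
      rw [Finset.mem_filter] at hi1 hi2
      have h1 := hfS i1 v (by rw [hSdef, Finset.mem_filter]; exact ⟨Finset.mem_univ _, hi1.2⟩)
      have h2 := hfS i2 v (by rw [hSdef, Finset.mem_filter]; exact ⟨Finset.mem_univ _, hi2.2⟩)
      by_contra hne
      have hdisj := hPG.2.2.1 hne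
      have heq' : f i1 v = f i2 v := heq
      have hm1 : s(v, f i1 v) ∈ (M i1).edgeSet := h1.1
      have hm2 : s(v, f i1 v) ∈ (M i2).edgeSet := by rw [heq']; exact h2.1
      exact Set.disjoint_left.mp hdisj hm1 hm2
    · intro u hu
      rw [SimpleGraph.mem_neighborFinset] at hu
      have hGadj : G.Adj v u := hHG hu
      obtain ⟨i, hi⟩ := hPG.2.1 s(v, u) hGadj
      have hPiv : P i v := ⟨u, hi, hu⟩
      refine ⟨i, Finset.mem_filter.mpr ⟨Finset.mem_univ _, hPiv⟩, ?_⟩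
      have := hfS i v (by rw [hSdef, Finset.mem_filter]; exact ⟨Finset.mem_univ _, hPiv⟩)
      exact hPG.2.2.2.1 i v (f i v) u this.1 hi
  have htot : ∑ i : Fin k, (S i).card = 2 * H.edgeFinset.card := by
    rw [← SimpleGraph.sum_degrees_eq_twice_card_edges]
    have : ∀ i : Fin k, (S i).card = ∑ v, if P i v then 1 else 0 := by
      intro i; rw [hSdef]; exact Finset.card_filter _ _
    rw [Finset.sum_congr rfl fun i _ => this i, Finset.sum_comm]
    refine Finset.sum_congr rfl fun v _ => ?_
    rw [← hdeg v, Finset.card_filter]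
  -- iterate
  set c : ℕ → ℕ := fun j => if h : j < k then (S ⟨j, h⟩).card else 0 with hc
  have hclaim : ∀ n, n ≤ k → (∑ j ∈ Finset.range n, c j) ≤ ∑ v, Φ n v := by
    intro n
    induction n with
    | zero => intro _; simp
    | succ n ih =>
      intro hn
      have hnk : n < k := hn
      rw [Finset.sum_range_succ]
      have h1 := ih (Nat.le_of_lt hnk)
      have h2 := hsum_step ⟨n, hnk⟩
      simp only [hc] at *
      rw [dif_pos hnk]
      calc (∑ j ∈ Finset.range n, if h : j < k then (S ⟨j, h⟩).card else 0) + (S ⟨n, hnk⟩).card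
          ≤ (∑ v, Φ n v) + (S ⟨n, hnk⟩).card := Nat.add_le_add_right h1 _
        _ ≤ ∑ v, Φ (n + 1) v := h2
  have hrange : ∑ j ∈ Finset.range k, c j = ∑ i : Fin k, (S i).card := by
    rw [← Fin.sum_univ_eq_sum_range]
    refine Finset.sum_congr rfl fun i _ => ?_
    rw [hc]
    simp [dif_pos i.isLt]
  have hbound : ∑ v, Φ k v ≤ (t - 1) * Fintype.card V := by
    calc ∑ v, Φ k v ≤ ∑ _v : V, (t - 1) := Finset.sum_le_sum fun v _ => phi_le k v
      _ = (t - 1) * Fintype.card V := by rw [Finset.sum_const, smul_eq_mul, mul_comm, Finset.card_univ]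
  have hfin : 2 * H.edgeFinset.card ≤ (t - 1) * Fintype.card V := by
    rw [← htot, ← hrange]
    exact le_trans (hclaim k le_rfl) hbound
  have hcard : H.edgeSet.ncard = H.edgeFinset.card := by
    rw [← SimpleGraph.coe_edgeFinset, Set.ncard_coe_finset]
  exact hcard ▸ hfin

end Weak

/-- Medium counting lemma: if an `s`-parallel-greedy graph `G` on `n` vertices has at least
`s·n/2` edges (`s` even), then `G` contains at least `s·n/4` monotonic paths with exactly
`s/2` edges. -/
theorem monotonic_path_count_lower_bound
    {V : Type*} [Fintype V] [DecidableEq V] (G : SimpleGraph V) [DecidableRel G.Adj]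
    (s k : ℕ) (hs : 2 ≤ s) (hse : Even s)
    (M : Fin k → SimpleGraph V) (hPG : IsParallelGreedy G s k M)
    (hm : s * Fintype.card V ≤ 2 * G.edgeFinset.card) :
    {x : (u : V) × (v : V) × G.Walk u v |
        x.2.2.IsPath ∧ x.2.2.length = s / 2 ∧ IsMonotonic M x.2.2}.Finite ∧
    s * Fintype.card V ≤ 4 *
      {x : (u : V) × (v : V) × G.Walk u v |
        x.2.2.IsPath ∧ x.2.2.length = s / 2 ∧ IsMonotonic M x.2.2}.ncard := by
  classical
  set t := s / 2 with htdef
  obtain ⟨r, hr⟩ := hse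
  have hst : s = 2 * t := by omega
  have ht1 : 1 ≤ t := by omega
  set P : Set ((u : V) × (v : V) × G.Walk u v) :=
    {x : (u : V) × (v : V) × G.Walk u v |
        x.2.2.IsPath ∧ x.2.2.length = t ∧ IsMonotonic M x.2.2} with hPdef
  haveI : ∀ u v : V, Fintype {p : G.Walk u v // p.length = t} := fun u v =>
    Fintype.subtype (G.finsetWalkLength t u v) (fun p => SimpleGraph.mem_finsetWalkLength_iff)
  have hPfin : P.Finite := by
    have hsub : P ⊆ Set.range (fun x : (u : V) × (v : V) × {p : G.Walk u v // p.length = t} =>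
        (⟨x.1, x.2.1, x.2.2.1⟩ : (u : V) × (v : V) × G.Walk u v)) := by
      rintro ⟨u, v, p⟩ hx
      exact ⟨⟨u, v, p, hx.2.1⟩, rfl⟩
    exact (Set.finite_range _).subset hsub
  refine ⟨hPfin, ?_⟩
  set m := P.ncard with hm0
  set Fch : Set (Sym2 V) := {e | ∃ x ∈ P, x.2.2.edges.head? = some e} with hFdef
  have hFm : Fch.ncard ≤ m := by
    have himg : Option.some '' Fch ⊆
        (fun x : (u : V) × (v : V) × G.Walk u v => x.2.2.edges.head?) '' P := by
      rintro _ ⟨e, ⟨x, hxP, hx⟩, rfl⟩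
      exact ⟨x, hxP, hx⟩
    calc Fch.ncard = (Option.some '' Fch).ncard :=
          (Set.ncard_image_of_injective _ (Option.some_injective _)).symm
      _ ≤ ((fun x : (u : V) × (v : V) × G.Walk u v => x.2.2.edges.head?) '' P).ncard :=
          Set.ncard_le_ncard himg (hPfin.image _)
      _ ≤ P.ncard := Set.ncard_image_le hPfin
  set H : SimpleGraph V := G.deleteEdges Fch with hHdef
  have hHG : H ≤ G := SimpleGraph.deleteEdges_le _
  have hNP : ∀ (u v : V) (p : G.Walk u v), p.length = t → IsMonotonic M p →
      (∀ e ∈ p.edges, e ∈ H.edgeSet) → False := by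
    intro u v p hlen hmono hin
    obtain ⟨l, hch, hf2⟩ := hmono
    have hpath : p.IsPath := monoIsPath hPG u v p l hch hf2 (by omega)
    have hxP : (⟨u, v, p⟩ : (u : V) × (v : V) × G.Walk u v) ∈ P :=
      ⟨hpath, hlen, ⟨l, hch, hf2⟩⟩
    have hne : p.edges ≠ [] := by
      have hl := SimpleGraph.Walk.length_edges p
      intro hcon
      rw [hcon] at hl
      simp at hl
      omega
    set e := p.edges.head hne with hedef
    have heF : e ∈ Fch := ⟨⟨u, v, p⟩, hxP, (List.head?_eq_head hne).symm ▸ rfl⟩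
    have heH := hin e (List.head_mem hne)
    rw [hHdef, SimpleGraph.edgeSet_deleteEdges] at heH
    exact heH.2 heF
  have hweak := weak_counting hPG ht1 (by omega) H hHG hNP
  have hcover : G.edgeSet ⊆ H.edgeSet ∪ Fch := by
    intro e he
    by_cases hc : e ∈ Fch
    · exact Or.inr hc
    · left
      rw [hHdef, SimpleGraph.edgeSet_deleteEdges]
      exact ⟨he, hc⟩
  have hEG : G.edgeFinset.card = G.edgeSet.ncard := by
    rw [← SimpleGraph.coe_edgeFinset, Set.ncard_coe_finset]
  have hEcount : G.edgeFinset.card ≤ H.edgeSet.ncard + m := by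
    calc G.edgeFinset.card = G.edgeSet.ncard := hEG
      _ ≤ (H.edgeSet ∪ Fch).ncard := Set.ncard_le_ncard hcover (Set.toFinite _)
      _ ≤ H.edgeSet.ncard + Fch.ncard := Set.ncard_union_le _ _
      _ ≤ H.edgeSet.ncard + m := Nat.add_le_add_left hFm _
  -- arithmetic
  obtain ⟨a, ha⟩ : ∃ a, t = a + 1 := ⟨t - 1, by omega⟩
  have ht1a : t - 1 = a := by omega
  rw [ht1a] at hweak
  set n := Fintype.card V with hn
  have hkey : s * n ≤ a * n + 2 * m := by
    calc s * n ≤ 2 * G.edgeFinset.card := hm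
      _ ≤ 2 * (H.edgeSet.ncard + m) := by omega
      _ = 2 * H.edgeSet.ncard + 2 * m := by ring
      _ ≤ a * n + 2 * m := by omega
  rw [hst, ha] at hkey ⊢
  nlinarith [hkey]
end

section
/- Let G be an s-parallel-greedy graph on n vertices with average degree d ≥ s (s even). Then G contains at least n·(c·d/s)^{s/2} monotonic paths with exactly s/2 edges, for some absolute constant c > 0. -/
open SimpleGraph


open SimpleGraph

namespace MPC

set_option linter.unusedSectionVars false
open scoped Classical

variable {V : Type} [Fintype V] [DecidableEq V]

/-- vertex `v` is matched within `H` at round `i`. -/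
def act (Mx : ℕ → SimpleGraph V) (H : Finset (Sym2 V)) (i : ℕ) (v : V) : Prop :=
  ∃ u, (Mx i).Adj v u ∧ s(v, u) ∈ H

/-- the partner of `v` at round `i` (junk value `v` if unmatched). -/
noncomputable def ptr (Mx : ℕ → SimpleGraph V) (H : Finset (Sym2 V)) (i : ℕ) (v : V) : V :=
  if h : act Mx H i v then h.choose else v

/-- capped Graham–Kleitman potential. -/
noncomputable def gp (Mx : ℕ → SimpleGraph V) (H : Finset (Sym2 V)) (t : ℕ) : ℕ → V → ℕ
  | 0, _ => 0
  | i + 1, v =>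
    if act Mx H i v then
      min t (max (gp Mx H t i v) (gp Mx H t i (ptr Mx H i v) + 1))
    else gp Mx H t i v

noncomputable def Afin (Mx : ℕ → SimpleGraph V) (H : Finset (Sym2 V)) (i : ℕ) : Finset V :=
  Finset.univ.filter (fun v => act Mx H i v)

noncomputable def Bfin (Mx : ℕ → SimpleGraph V) (H : Finset (Sym2 V)) (t i : ℕ) : Finset V :=
  (Afin Mx H i).filter (fun v => t - 1 ≤ gp Mx H t i (ptr Mx H i v))

section basic

variable {Mx : ℕ → SimpleGraph V} {H : Finset (Sym2 V)} {t : ℕ}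

lemma ptr_adj {i v} (h : act Mx H i v) :
    (Mx i).Adj v (ptr Mx H i v) ∧ s(v, ptr Mx H i v) ∈ H := by
  rw [ptr, dif_pos h]; exact h.choose_spec

lemma ptr_eq (hm : ∀ i v u w, (Mx i).Adj v u → (Mx i).Adj v w → u = w)
    {i v w} (h : act Mx H i v) (hadj : (Mx i).Adj v w) : w = ptr Mx H i v :=
  hm i v w _ hadj (ptr_adj h).1

lemma act_ptr {i v} (h : act Mx H i v) : act Mx H i (ptr Mx H i v) := by
  refine ⟨v, (ptr_adj h).1.symm, ?_⟩
  rw [Sym2.eq_swap]; exact (ptr_adj h).2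

lemma ptr_ptr (hm : ∀ i v u w, (Mx i).Adj v u → (Mx i).Adj v w → u = w)
    {i v} (h : act Mx H i v) : ptr Mx H i (ptr Mx H i v) = v :=
  (ptr_eq hm (act_ptr h) (ptr_adj h).1.symm).symm

lemma gp_le : ∀ i v, gp Mx H t i v ≤ t
  | 0, _ => Nat.zero_le t
  | i + 1, v => by
    rw [gp]
    split
    · exact min_le_left _ _
    · exact gp_le i v

lemma gp_succ_act {i v} (h : act Mx H i v) :
    gp Mx H t (i + 1) v = min t (max (gp Mx H t i v) (gp Mx H t i (ptr Mx H i v) + 1)) := by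
  rw [gp, if_pos h]

lemma gp_succ_nact {i v} (h : ¬ act Mx H i v) : gp Mx H t (i + 1) v = gp Mx H t i v := by
  rw [gp, if_neg h]

lemma sum_step (hm : ∀ i v u w, (Mx i).Adj v u → (Mx i).Adj v w → u = w) (i : ℕ) :
    (∑ v, gp Mx H t i v) + (Afin Mx H i).card ≤
      (∑ v, gp Mx H t (i + 1) v) + (Bfin Mx H t i).card := by
  have hsplit : ∀ (f : V → ℕ),
      (∑ v, f v) = (∑ v ∈ Afin Mx H i, f v)
        + ∑ v ∈ Finset.univ.filter (fun v => ¬ act Mx H i v), f v :=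
    fun f => (Finset.sum_filter_add_sum_filter_not _ _ _).symm
  rw [hsplit (gp Mx H t i), hsplit (gp Mx H t (i+1))]
  have hoff : ∑ v ∈ Finset.univ.filter (fun v => ¬ act Mx H i v), gp Mx H t (i+1) v
      = ∑ v ∈ Finset.univ.filter (fun v => ¬ act Mx H i v), gp Mx H t i v := by
    refine Finset.sum_congr rfl fun v hv => ?_
    exact gp_succ_nact (Finset.mem_filter.mp hv).2
  rw [hoff]
  have hB : (Bfin Mx H t i).card
      = ∑ v ∈ Afin Mx H i, (if t - 1 ≤ gp Mx H t i (ptr Mx H i v) then 1 else 0) := by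
    rw [Bfin, Finset.card_filter]
  have hactA : ∀ v ∈ Afin Mx H i, act Mx H i v := fun v hv => (Finset.mem_filter.mp hv).2
  have hptrA : ∀ v ∈ Afin Mx H i, ptr Mx H i v ∈ Afin Mx H i :=
    fun v hv => Finset.mem_filter.mpr ⟨Finset.mem_univ _, act_ptr (hactA v hv)⟩
  have hinv : ∀ v ∈ Afin Mx H i, ptr Mx H i (ptr Mx H i v) = v :=
    fun v hv => ptr_ptr hm (hactA v hv)
  have reidx : ∀ f : V → ℕ,
      ∑ v ∈ Afin Mx H i, f (ptr Mx H i v) = ∑ v ∈ Afin Mx H i, f v := fun f =>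
    Finset.sum_nbij' (ptr Mx H i) (ptr Mx H i) hptrA hptrA hinv hinv (fun a _ => rfl)
  set F : V → ℕ := fun v =>
    gp Mx H t (i+1) v + (if t - 1 ≤ gp Mx H t i (ptr Mx H i v) then 1 else 0) with hF
  have hpt : ∀ v ∈ Afin Mx H i,
      (gp Mx H t i v + 1) + (gp Mx H t i (ptr Mx H i v) + 1) ≤ F v + F (ptr Mx H i v) := by
    intro v hv
    have hact := hactA v hv
    have hact2 := act_ptr hact
    have e1 := gp_succ_act (t := t) hact
    have e2 := gp_succ_act (t := t) hact2
    have hpp := ptr_ptr hm hact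
    have b1 := gp_le (Mx := Mx) (H := H) (t := t) i v
    have b2 := gp_le (Mx := Mx) (H := H) (t := t) i (ptr Mx H i v)
    simp only [hF, e1, e2, hpp]
    split_ifs <;> omega
  have h2 := Finset.sum_le_sum hpt
  have hL : ∑ v ∈ Afin Mx H i, (gp Mx H t i v + 1 + (gp Mx H t i (ptr Mx H i v) + 1))
      = 2 * ∑ v ∈ Afin Mx H i, (gp Mx H t i v + 1) := by
    rw [Finset.sum_add_distrib, reidx (fun v => gp Mx H t i v + 1)]; ring
  have hR : ∑ v ∈ Afin Mx H i, (F v + F (ptr Mx H i v))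
      = 2 * ∑ v ∈ Afin Mx H i, F v := by
    rw [Finset.sum_add_distrib, reidx F]; ring
  rw [hL, hR] at h2
  have h4 : ∑ v ∈ Afin Mx H i, F v
      = (∑ v ∈ Afin Mx H i, gp Mx H t (i+1) v) + (Bfin Mx H t i).card := by
    rw [hF, Finset.sum_add_distrib, hB]
  have h5 : ∑ v ∈ Afin Mx H i, (gp Mx H t i v + 1)
      = (∑ v ∈ Afin Mx H i, gp Mx H t i v) + (Afin Mx H i).card := by
    rw [Finset.sum_add_distrib]; simp
  omega

end basic

section part2
open List

variable {α : Type*} {β : Type*}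

lemma forall₂_mem {R : α → β → Prop} {l₁ : List α} {l₂ : List β} (h : List.Forall₂ R l₁ l₂)
    {a : α} (ha : a ∈ l₁) : ∃ b ∈ l₂, R a b := by
  induction h with
  | nil => simp at ha
  | cons hr hl ih =>
    rcases List.mem_cons.mp ha with rfl | ha'
    · exact ⟨_, List.mem_cons_self, hr⟩
    · obtain ⟨b, hb, hrb⟩ := ih ha'
      exact ⟨b, List.mem_cons_of_mem _ hb, hrb⟩

lemma forall₂_split {R : α → β → Prop} :
    ∀ {A B : List α} {l : List β}, List.Forall₂ R (A ++ B) l →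
      ∃ l₁ l₂, l = l₁ ++ l₂ ∧ List.Forall₂ R A l₁ ∧ List.Forall₂ R B l₂ := by
  intro A
  induction A with
  | nil => exact fun {B l} h => ⟨[], l, rfl, List.Forall₂.nil, h⟩
  | cons a A ih =>
    intro B l h
    cases h with
    | cons hr h' =>
      obtain ⟨l₁, l₂, rfl, h1, h2⟩ := ih h'
      exact ⟨_ :: l₁, l₂, rfl, List.Forall₂.cons hr h1, h2⟩

end part2


section accum

variable {Mx : ℕ → SimpleGraph V} {H : Finset (Sym2 V)} {t : ℕ}

lemma sum_g (hm : ∀ i v u w, (Mx i).Adj v u → (Mx i).Adj v w → u = w) (N : ℕ) :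
    ∑ i ∈ Finset.range N, (Afin Mx H i).card ≤
      (∑ v, gp Mx H t N v) + ∑ i ∈ Finset.range N, (Bfin Mx H t i).card := by
  induction N with
  | zero => simp
  | succ N ih =>
    rw [Finset.sum_range_succ, Finset.sum_range_succ]
    have := sum_step (H := H) (t := t) hm N
    omega

lemma two_card_le (hm : ∀ i v u w, (Mx i).Adj v u → (Mx i).Adj v w → u = w) {K : ℕ} :
    ∀ (H : Finset (Sym2 V)), (∀ e ∈ H, ∃ i < K, e ∈ (Mx i).edgeSet) →
      2 * H.card ≤ ∑ i ∈ Finset.range K, (Afin Mx H i).card := by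
  intro H
  induction H using Finset.induction_on with
  | empty => simp
  | @insert e Hs he ih =>
    intro hcov
    obtain ⟨j, hjK, hej⟩ := hcov e (Finset.mem_insert_self _ _)
    have hrep : ∀ (e' : Sym2 V), e' ∈ (Mx j).edgeSet → ∃ x y, e' = s(x, y) ∧ (Mx j).Adj x y := by
      intro e'
      induction e' using Sym2.ind with
      | _ x y => exact fun h => ⟨x, y, rfl, h⟩
    obtain ⟨x, y, rfl, hadj⟩ := hrep e hej
    have hne : x ≠ y := hadj.ne
    have hmono : ∀ i, Afin Mx Hs i ⊆ Afin Mx (insert s(x, y) Hs) i := by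
      intro i v hv
      rw [Afin, Finset.mem_filter] at hv ⊢
      obtain ⟨u, hu1, hu2⟩ := hv.2
      exact ⟨hv.1, u, hu1, Finset.mem_insert_of_mem hu2⟩
    have hxA : x ∉ Afin Mx Hs j := by
      rw [Afin, Finset.mem_filter]
      rintro ⟨-, u, hu1, hu2⟩
      rw [hm j x u y hu1 hadj] at hu2
      exact he hu2
    have hyA : y ∉ Afin Mx Hs j := by
      rw [Afin, Finset.mem_filter]
      rintro ⟨-, u, hu1, hu2⟩
      rw [hm j y u x hu1 hadj.symm, Sym2.eq_swap] at hu2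
      exact he hu2
    have hxI : x ∈ Afin Mx (insert s(x, y) Hs) j := by
      rw [Afin, Finset.mem_filter]
      exact ⟨Finset.mem_univ _, y, hadj, Finset.mem_insert_self _ _⟩
    have hyI : y ∈ Afin Mx (insert s(x, y) Hs) j := by
      rw [Afin, Finset.mem_filter]
      refine ⟨Finset.mem_univ _, x, hadj.symm, ?_⟩
      rw [Sym2.eq_swap]
      exact Finset.mem_insert_self _ _
    have hsub : insert x (insert y (Afin Mx Hs j)) ⊆ Afin Mx (insert s(x, y) Hs) j := by
      rw [Finset.insert_subset_iff, Finset.insert_subset_iff]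
      exact ⟨hxI, hyI, hmono j⟩
    have hcard : (Afin Mx Hs j).card + 2 ≤ (Afin Mx (insert s(x, y) Hs) j).card := by
      have h1 : (insert x (insert y (Afin Mx Hs j))).card = (Afin Mx Hs j).card + 2 := by
        rw [Finset.card_insert_of_notMem (by simp [hne, hxA]),
          Finset.card_insert_of_notMem hyA]
      rw [← h1]
      exact Finset.card_le_card hsub
    have hIH := ih (fun e' he' => hcov e' (Finset.mem_insert_of_mem he'))
    have hjmem : j ∈ Finset.range K := Finset.mem_range.mpr hjK
    have e1 := Finset.add_sum_erase (Finset.range K)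
      (fun i => (Afin Mx (insert s(x, y) Hs) i).card) hjmem
    have e2 := Finset.add_sum_erase (Finset.range K) (fun i => (Afin Mx Hs i).card) hjmem
    beta_reduce at e1 e2
    have e3 : ∑ i ∈ (Finset.range K).erase j, (Afin Mx Hs i).card ≤
        ∑ i ∈ (Finset.range K).erase j, (Afin Mx (insert s(x, y) Hs) i).card :=
      Finset.sum_le_sum fun i _ => Finset.card_le_card (hmono i)
    rw [Finset.card_insert_of_notMem he]
    omega

lemma exists_walk {G : SimpleGraph V} {k : ℕ} {M : Fin k → SimpleGraph V}
    (hle : ∀ i, Mx i ≤ G) (hMx : ∀ (i) (h : i < k), Mx i = M ⟨i, h⟩)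
    (hklt : ∀ i v, act Mx H i v → i < k) :
    ∀ i v j, j ≤ gp Mx H t i v → ∃ (u : V) (p : G.Walk u v) (l : List (Fin k)),
      p.length = j ∧ l.Chain' (· < ·) ∧
      List.Forall₂ (fun e a => e ∈ (M a).edgeSet) p.edges l ∧
      (∀ a ∈ l, (a : ℕ) < i) ∧ ∀ e ∈ p.edges, e ∈ H := by
  intro i
  induction i with
  | zero =>
    intro v j hj
    refine ⟨v, SimpleGraph.Walk.nil, [], ?_⟩
    have : j = 0 := by simpa [gp] using hj
    simp [this]
    exact List.isChain_nil
  | succ i ih =>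
    intro v j hj
    by_cases hact : act Mx H i v
    · rw [gp_succ_act hact] at hj
      by_cases hja : j ≤ gp Mx H t i v
      · obtain ⟨u, p, l, h1, h2, h3, h4, h5⟩ := ih v j hja
        exact ⟨u, p, l, h1, h2, h3, fun a ha => Nat.lt_succ_of_lt (h4 a ha), h5⟩
      · have hjb : j ≤ gp Mx H t i (ptr Mx H i v) + 1 := by
          have := le_trans hj (min_le_right _ _)
          omega
        have hj1 : 1 ≤ j := by omega
        obtain ⟨u, q, l, h1, h2, h3, h4, h5⟩ := ih (ptr Mx H i v) (j - 1) (by omega)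
        have hik := hklt i v hact
        have hadj := (ptr_adj hact).1
        have hadjG : G.Adj (ptr Mx H i v) v := (hle i) hadj.symm
        refine ⟨u, q.concat hadjG, l ++ [⟨i, hik⟩], ?_, ?_, ?_, ?_, ?_⟩
        · rw [SimpleGraph.Walk.length_concat, h1]; omega
        · rw [List.Chain', List.isChain_append]
          refine ⟨h2, List.isChain_singleton _, fun a ha b hb => ?_⟩
          have ha' : a ∈ l := List.mem_of_mem_getLast? ha
          have hb' : (⟨i, hik⟩ : Fin k) = b := by simpa using hb
          rw [← hb']
          exact h4 a ha'
        · rw [SimpleGraph.Walk.edges_concat, List.concat_eq_append]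
          refine List.rel_append h3 (List.Forall₂.cons ?_ List.Forall₂.nil)
          rw [← hMx i hik]
          exact (Mx i).mem_edgeSet.mpr hadj.symm
        · intro a ha
          rcases List.mem_append.mp ha with ha' | ha'
          · exact Nat.lt_succ_of_lt (h4 a ha')
          · have : a = ⟨i, hik⟩ := by simpa using ha'
            subst this
            exact Nat.lt_succ_self i
        · intro e he
          rw [SimpleGraph.Walk.edges_concat, List.concat_eq_append] at he
          rcases List.mem_append.mp he with he' | he'
          · exact h5 e he'
          · have : e = s(ptr Mx H i v, v) := by simpa using he'
            subst this
            rw [Sym2.eq_swap]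
            exact (ptr_adj hact).2
    · rw [gp_succ_nact hact] at hj
      obtain ⟨u, p, l, h1, h2, h3, h4, h5⟩ := ih v j hj
      exact ⟨u, p, l, h1, h2, h3, fun a ha => Nat.lt_succ_of_lt (h4 a ha), h5⟩

end accum

section paths

variable {G : SimpleGraph V} {s k : ℕ} {M : Fin k → SimpleGraph V}

lemma no_anti_cycle (hPG : IsParallelGreedy G s k M) {u : V} (p : G.Walk u u)
    (l : List (Fin k)) (hch : l.Chain' (· > ·))
    (hf : List.Forall₂ (fun e a => e ∈ (M a).edgeSet) p.edges l)
    (h1 : 1 ≤ p.length) (h2 : p.length ≤ s + 1) : False := by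
  cases p with
  | nil => simp at h1
  | @cons _ w _ hadj q =>
    rw [SimpleGraph.Walk.edges_cons] at hf
    cases hf with
    | cons hr hf' =>
      rename_i a l'
      have hpw : ∀ b ∈ l', b < a := by
        have hp := List.isChain_iff_pairwise.mp hch
        exact fun b hb => (List.pairwise_cons.mp hp).1 b hb
      have madj : (M a).Adj u w := (M a).mem_edgeSet.mp hr
      have hsub : ∀ e ∈ q.edges, e ∈ (⨆ j : {j : Fin k // j < a}, M j.1).edgeSet := by
        intro e he
        obtain ⟨b, hb, hrb⟩ := forall₂_mem hf' he
        exact SimpleGraph.edgeSet_mono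
          (le_iSup (fun j : {j : Fin k // j < a} => M j.1) ⟨b, hpw b hb⟩) hrb
      have hcond := hPG.2.2.2.2 a u w madj ((q.transfer _ hsub).reverse)
      rw [SimpleGraph.Walk.length_reverse, SimpleGraph.Walk.length_transfer] at hcond
      rw [SimpleGraph.Walk.length_cons] at h2
      omega

lemma mono_short_path (hPG : IsParallelGreedy G s k M) {u v : V} (p : G.Walk u v)
    (l : List (Fin k)) (hch : l.Chain' (· < ·))
    (hf : List.Forall₂ (fun e a => e ∈ (M a).edgeSet) p.edges l)
    (hlen : p.length ≤ s) : p.IsPath := by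
  induction p generalizing l with
  | nil => exact SimpleGraph.Walk.IsPath.nil
  | @cons u w v hadj q ih =>
    rw [SimpleGraph.Walk.edges_cons] at hf
    cases hf with
    | cons hr hf' =>
      rename_i a l'
      rw [SimpleGraph.Walk.length_cons] at hlen
      have hq : q.IsPath := ih l' hch.tail hf' (by omega)
      rw [SimpleGraph.Walk.cons_isPath_iff]
      refine ⟨hq, fun hu => ?_⟩
      have hedges : q.edges = (q.takeUntil u hu).edges ++ (q.dropUntil u hu).edges := by
        rw [← SimpleGraph.Walk.edges_append, q.take_spec hu]
      rw [hedges] at hf'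
      obtain ⟨l₁, l₂, rfl, hA, hB⟩ := forall₂_split hf'
      have hchain2 : (a :: l₁).Chain' (· < ·) := hch.prefix ⟨l₂, by simp⟩
      have hcycf : List.Forall₂ (fun e b => e ∈ (M b).edgeSet)
          ((SimpleGraph.Walk.cons hadj (q.takeUntil u hu)).edges) (a :: l₁) := by
        rw [SimpleGraph.Walk.edges_cons]
        exact List.Forall₂.cons hr hA
      apply no_anti_cycle hPG (SimpleGraph.Walk.cons hadj (q.takeUntil u hu)).reverse
        (a :: l₁).reverse
      · rw [List.Chain', List.isChain_reverse]
        exact hchain2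
      · rw [SimpleGraph.Walk.edges_reverse]
        exact List.rel_reverse hcycf
      · rw [SimpleGraph.Walk.length_reverse]
        simp [SimpleGraph.Walk.length_cons]
      · rw [SimpleGraph.Walk.length_reverse, SimpleGraph.Walk.length_cons]
        have := SimpleGraph.Walk.length_takeUntil_le q hu
        omega

end paths

end MPC
section prob

variable {ι : Type*} [DecidableEq ι]

lemma sum_w_one (E : Finset ι) (p : ℝ) :
    ∑ H ∈ E.powerset, p ^ H.card * (1 - p) ^ (E.card - H.card) = 1 := by
  have h := Finset.prod_add (fun _ : ι => p) (fun _ : ι => 1 - p) E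
  have h2 : ∀ H ∈ E.powerset,
      (∏ _i ∈ H, p) * ∏ _i ∈ E \ H, (1 - p)
        = p ^ H.card * (1 - p) ^ (E.card - H.card) := by
    intro H hH
    rw [Finset.prod_const, Finset.prod_const, Finset.card_sdiff_of_subset (Finset.mem_powerset.mp hH)]
  rw [Finset.sum_congr rfl h2] at h
  rw [← h]
  simp

lemma sum_w_subset (E S : Finset ι) (hS : S ⊆ E) (p : ℝ) :
    ∑ H ∈ E.powerset, (if S ⊆ H then p ^ H.card * (1 - p) ^ (E.card - H.card) else 0)
      = p ^ S.card := by
  have h := Finset.prod_add (fun _ : ι => p) (fun e : ι => if e ∈ S then 0 else 1 - p) E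
  have hR : ∀ H ∈ E.powerset,
      (∏ _i ∈ H, p) * ∏ e ∈ E \ H, (if e ∈ S then (0:ℝ) else 1 - p)
        = if S ⊆ H then p ^ H.card * (1 - p) ^ (E.card - H.card) else 0 := by
    intro H hH
    by_cases hSH : S ⊆ H
    · have hc : ∀ e ∈ E \ H, (if e ∈ S then (0:ℝ) else 1 - p) = 1 - p := by
        intro e he
        rw [if_neg fun heS => (Finset.mem_sdiff.mp he).2 (hSH heS)]
      rw [Finset.prod_congr rfl hc, Finset.prod_const, Finset.prod_const,
        Finset.card_sdiff_of_subset (Finset.mem_powerset.mp hH), if_pos hSH]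
    · obtain ⟨a, haS, haH⟩ := Finset.not_subset.mp hSH
      rw [if_neg hSH]
      exact mul_eq_zero_of_right _
        (Finset.prod_eq_zero (Finset.mem_sdiff.mpr ⟨hS haS, haH⟩) (if_pos haS))
  rw [Finset.sum_congr rfl hR] at h
  rw [← h]
  rw [← Finset.prod_filter_mul_prod_filter_not E (· ∈ S)]
  have hfil : E.filter (· ∈ S) = S := by
    rw [Finset.filter_mem_eq_inter, Finset.inter_eq_right.mpr hS]
  rw [hfil]
  have h1 : ∏ e ∈ S, (p + if e ∈ S then (0:ℝ) else 1 - p) = p ^ S.card := by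
    have hc : ∀ e ∈ S, (p + if e ∈ S then (0:ℝ) else 1 - p) = p :=
      fun e he => by rw [if_pos he, add_zero]
    rw [Finset.prod_congr rfl hc, Finset.prod_const]
  have h2 : ∏ e ∈ E.filter (fun e => ¬ e ∈ S), (p + if e ∈ S then (0:ℝ) else 1 - p) = 1 := by
    have hc : ∀ e ∈ E.filter (fun e => ¬ e ∈ S),
        (p + if e ∈ S then (0:ℝ) else 1 - p) = 1 := by
      intro e he
      rw [if_neg (Finset.mem_filter.mp he).2]
      ring
    rw [Finset.prod_congr rfl hc, Finset.prod_const, one_pow]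
  rw [h1, h2, mul_one]

lemma sum_w_card (E : Finset ι) (p : ℝ) :
    ∑ H ∈ E.powerset, (p ^ H.card * (1 - p) ^ (E.card - H.card)) * H.card
      = p * E.card := by
  have hcard : ∀ H ∈ E.powerset,
      (p ^ H.card * (1 - p) ^ (E.card - H.card)) * H.card
        = ∑ e ∈ E, (if ({e} : Finset ι) ⊆ H then
            p ^ H.card * (1 - p) ^ (E.card - H.card) else 0) := by
    intro H hH
    have : ∀ e ∈ E, (if ({e} : Finset ι) ⊆ H then
        p ^ H.card * (1 - p) ^ (E.card - H.card) else 0)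
        = (p ^ H.card * (1 - p) ^ (E.card - H.card)) * (if e ∈ H then (1:ℝ) else 0) := by
      intro e he
      simp only [Finset.singleton_subset_iff]
      by_cases heH : e ∈ H <;> simp [heH]
    rw [Finset.sum_congr rfl this, ← Finset.mul_sum]
    congr 1
    rw [Finset.sum_boole, Finset.filter_mem_eq_inter,
      Finset.inter_eq_right.mpr (Finset.mem_powerset.mp hH)]
  rw [Finset.sum_congr rfl hcard, Finset.sum_comm]
  rw [Finset.sum_congr rfl
    (fun e he => sum_w_subset E {e} (Finset.singleton_subset_iff.mpr he) p)]
  simp [mul_comm]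

end prob
/-- Full counting lemma: there is an absolute constant `c > 0` such that every
`s`-parallel-greedy graph `G` on `n ≥ 1` vertices (`s` even) with average degree
`d = 2m/n ≥ s` contains at least `n·(c·d/s)^(s/2)` monotonic paths with exactly
`s/2` edges. -/
theorem monotonic_path_full_counting :
    ∃ c : ℝ, 0 < c ∧
      ∀ (V : Type) [Fintype V] [DecidableEq V] (G : SimpleGraph V) [DecidableRel G.Adj]
        (s k : ℕ) (M : Fin k → SimpleGraph V), IsParallelGreedy G s k M → 2 ≤ s → Even s →
        0 < Fintype.card V →
        (s : ℝ) ≤ 2 * G.edgeFinset.card / Fintype.card V →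
        (Fintype.card V : ℝ) *
            (c * (2 * G.edgeFinset.card / Fintype.card V) / s) ^ (s / 2) ≤
          ({x : (u : V) × (v : V) × G.Walk u v |
              x.2.2.IsPath ∧ x.2.2.length = s / 2 ∧ IsMonotonic M x.2.2}.ncard : ℝ) := by
  classical
  refine ⟨1/2, by norm_num, ?_⟩
  intro V _ _ G _ s k M hPG hs2 hse hn hd
  obtain ⟨r, hr⟩ := hse
  set t := s / 2 with htdef
  have hst : s = 2 * t := by omega
  have ht1 : 1 ≤ t := by omega
  set n := Fintype.card V with hndef
  set m := G.edgeFinset.card with hmdef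
  set T := {x : (u : V) × (v : V) × G.Walk u v |
      x.2.2.IsPath ∧ x.2.2.length = s / 2 ∧ IsMonotonic M x.2.2} with hT
  -- T is finite
  have hTfin : T.Finite := by
    have hsub : T ⊆ Set.range
        (fun y : (Σ u : V, Σ v : V, {p : G.Walk u v | p.length = t}) =>
          (⟨y.1, y.2.1, y.2.2.1⟩ : (u : V) × (v : V) × G.Walk u v)) := by
      rintro ⟨u, v, q⟩ hx
      exact ⟨⟨u, v, ⟨q, hx.2.1⟩⟩, rfl⟩
    exact (Set.finite_range _).subset hsub
  set Tf := hTfin.toFinset with hTf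
  have hTcard : (T.ncard : ℝ) = Tf.card := by
    rw [Set.ncard_eq_toFinset_card T hTfin]
  -- extended matchings
  set Mx : ℕ → SimpleGraph V := fun i => if h : i < k then M ⟨i, h⟩ else ⊥ with hMxdef
  have hMx : ∀ (i) (h : i < k), Mx i = M ⟨i, h⟩ := fun i h => dif_pos h
  have hle : ∀ i, Mx i ≤ G := by
    intro i
    by_cases h : i < k
    · rw [hMx i h]; exact hPG.1 _
    · rw [hMxdef]; simp only [dif_neg h]; exact bot_le
  have hm : ∀ i v u w, (Mx i).Adj v u → (Mx i).Adj v w → u = w := by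
    intro i v u w h1 h2
    by_cases h : i < k
    · rw [hMx i h] at h1 h2; exact hPG.2.2.2.1 _ v u w h1 h2
    · rw [hMxdef] at h1; simp only [dif_neg h] at h1; exact absurd h1 (by simp)
  have hklt : ∀ (H : Finset (Sym2 V)) (i : ℕ) (v : V), MPC.act Mx H i v → i < k := by
    rintro H i v ⟨u, hadj, -⟩
    by_contra h
    rw [hMxdef] at hadj
    simp only [dif_neg h] at hadj
    exact absurd hadj (by simp)
  obtain ⟨v₀⟩ : Nonempty V := Fintype.card_pos_iff.mp hn
  -- key deterministic inequality, for every H ⊆ E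
  have key : ∀ H ∈ G.edgeFinset.powerset, 2 * H.card ≤ t * n +
      (Tf.filter (fun x => ∀ e ∈ x.2.2.edges, e ∈ H)).card := by
    intro H hHp
    have hHsub : H ⊆ G.edgeFinset := Finset.mem_powerset.mp hHp
    have hcov : ∀ e ∈ H, ∃ i < k, e ∈ (Mx i).edgeSet := by
      intro e he
      obtain ⟨j, hj⟩ := hPG.2.1 e (SimpleGraph.mem_edgeFinset.mp (hHsub he))
      refine ⟨j.1, j.2, ?_⟩
      rw [hMx j.1 j.2, Fin.eta]
      exact hj
    have h1 : 2 * H.card ≤ ∑ i ∈ Finset.range k, (MPC.Afin Mx H i).card :=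
      MPC.two_card_le hm H hcov
    have h2 := MPC.sum_g (Mx := Mx) (H := H) (t := t) hm k
    have h3 : (∑ v, MPC.gp Mx H t k v) ≤ t * n := by
      calc (∑ v, MPC.gp Mx H t k v) ≤ ∑ _v : V, t :=
            Finset.sum_le_sum (fun v _ => MPC.gp_le k v)
        _ = t * n := by rw [Finset.sum_const, Finset.card_univ, smul_eq_mul, mul_comm]
    set D := (Finset.range k).sigma (fun i => MPC.Bfin Mx H t i) with hD
    have hDcard : D.card = ∑ i ∈ Finset.range k, (MPC.Bfin Mx H t i).card :=
      Finset.card_sigma _ _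
    have hgood : ∀ y ∈ D, ∃ x : (u : V) × (v : V) × G.Walk u v,
        (x ∈ Tf ∧ ∀ e ∈ x.2.2.edges, e ∈ H) ∧ x.2.1 = y.2 ∧
          ∃ e, x.2.2.edges.getLast? = some e ∧ e ∈ (Mx y.1).edgeSet := by
      rintro ⟨i, v⟩ hy
      rw [hD, Finset.mem_sigma] at hy
      obtain ⟨-, hvB⟩ := hy
      rw [MPC.Bfin, Finset.mem_filter] at hvB
      obtain ⟨hvA, hge⟩ := hvB
      rw [MPC.Afin, Finset.mem_filter] at hvA
      have hact : MPC.act Mx H i v := hvA.2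
      have hik : i < k := hklt H i v hact
      obtain ⟨u, q, l, hlen, hch, hf, hlab, hHe⟩ :=
        MPC.exists_walk (H := H) (t := t) hle hMx (hklt H) i (MPC.ptr Mx H i v) (t-1) hge
      have hadj := (MPC.ptr_adj hact).1
      have hadjG : G.Adj (MPC.ptr Mx H i v) v := (hle i) hadj.symm
      have hlenf : (q.concat hadjG).length = t := by
        rw [SimpleGraph.Walk.length_concat, hlen]; omega
      have hchain2 : (l ++ [(⟨i, hik⟩ : Fin k)]).Chain' (· < ·) := by
        rw [List.Chain', List.isChain_append]
        refine ⟨hch, List.isChain_singleton _, fun a ha b hb => ?_⟩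
        have ha' : a ∈ l := List.mem_of_mem_getLast? ha
        have hb' : (⟨i, hik⟩ : Fin k) = b := by simpa using hb
        rw [← hb']
        exact hlab a ha'
      have hlast : s(MPC.ptr Mx H i v, v) ∈ (Mx i).edgeSet :=
        (Mx i).mem_edgeSet.mpr hadj.symm
      have hfor2 : List.Forall₂ (fun e a => e ∈ (M a).edgeSet)
          (q.concat hadjG).edges (l ++ [(⟨i, hik⟩ : Fin k)]) := by
        rw [SimpleGraph.Walk.edges_concat, List.concat_eq_append]
        refine List.rel_append hf (List.Forall₂.cons ?_ List.Forall₂.nil)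
        rw [← hMx i hik]
        exact hlast
      have hpath : (q.concat hadjG).IsPath :=
        MPC.mono_short_path hPG _ _ hchain2 hfor2 (by rw [hlenf]; omega)
      have hmem : (⟨u, v, q.concat hadjG⟩ : (u : V) × (v : V) × G.Walk u v) ∈ Tf := by
        rw [hTf, Set.Finite.mem_toFinset]
        exact ⟨hpath, hlenf, ⟨l ++ [(⟨i, hik⟩ : Fin k)], hchain2, hfor2⟩⟩
      refine ⟨⟨u, v, q.concat hadjG⟩, ⟨hmem, ?_⟩, rfl, ?_⟩
      · intro e he
        rw [SimpleGraph.Walk.edges_concat, List.concat_eq_append] at he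
        rcases List.mem_append.mp he with he' | he'
        · exact hHe e he'
        · have : e = s(MPC.ptr Mx H i v, v) := by simpa using he'
          rw [this, Sym2.eq_swap]
          exact (MPC.ptr_adj hact).2
      · refine ⟨s(MPC.ptr Mx H i v, v), ?_, hlast⟩
        rw [SimpleGraph.Walk.edges_concat, List.concat_eq_append]
        exact List.getLast?_concat
    choose F hF using hgood
    set f : (Σ _ : ℕ, V) → (u : V) × (v : V) × G.Walk u v :=
      fun y => if h : y ∈ D then F y h else ⟨v₀, v₀, SimpleGraph.Walk.nil⟩ with hf
    have hmaps : ∀ y ∈ D, f y ∈ Tf.filter (fun x => ∀ e ∈ x.2.2.edges, e ∈ H) := by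
      intro y hy
      rw [hf]
      simp only [dif_pos hy]
      exact Finset.mem_filter.mpr ⟨(hF y hy).1.1, (hF y hy).1.2⟩
    have hinj : Set.InjOn f D := by
      intro y hy' z hz' heq
      have hy : y ∈ D := Finset.mem_coe.mp hy'
      have hz : z ∈ D := Finset.mem_coe.mp hz'
      simp only [hf, dif_pos hy, dif_pos hz] at heq
      have hy2 := (hF y hy).2.1
      have hz2 := (hF z hz).2.1
      obtain ⟨e, hel, heM⟩ := (hF y hy).2.2
      obtain ⟨e', hel', heM'⟩ := (hF z hz).2.2
      rw [heq] at hy2 hel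
      have hee : e = e' := by
        rw [hel'] at hel
        exact (Option.some_injective _ hel).symm
      have hyk : y.1 < k := Finset.mem_range.mp (Finset.mem_sigma.mp hy).1
      have hzk : z.1 < k := Finset.mem_range.mp (Finset.mem_sigma.mp hz).1
      have hfst : y.1 = z.1 := by
        by_contra hne
        have hFne : (⟨y.1, hyk⟩ : Fin k) ≠ ⟨z.1, hzk⟩ := by
          simp only [ne_eq, Fin.mk.injEq]
          exact hne
        have hdisj := hPG.2.2.1 hFne
        rw [hMx y.1 hyk] at heM
        rw [hMx z.1 hzk] at heM'
        rw [hee] at heM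
        exact Set.disjoint_left.mp hdisj heM heM'
      have hsnd : y.2 = z.2 := by rw [← hy2, ← hz2]
      obtain ⟨i1, v1⟩ := y
      obtain ⟨i2, v2⟩ := z
      simp only at hfst hsnd
      subst hfst
      subst hsnd
      rfl
    have h4 : D.card ≤ (Tf.filter (fun x => ∀ e ∈ x.2.2.edges, e ∈ H)).card :=
      Finset.card_le_card_of_injOn f hmaps hinj
    omega
  -- probabilistic averaging
  have main : ∀ p : ℝ, 0 ≤ p → p ≤ 1 →
      2 * p * m ≤ t * n + p ^ t * Tf.card := by
    intro p hp0 hp1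
    have wnn : ∀ H ∈ G.edgeFinset.powerset,
        (0:ℝ) ≤ p ^ H.card * (1 - p) ^ (m - H.card) :=
      fun H _ => mul_nonneg (pow_nonneg hp0 _) (pow_nonneg (by linarith) _)
    have step1 : 2 * p * (m:ℝ)
        = ∑ H ∈ G.edgeFinset.powerset,
            (p ^ H.card * (1 - p) ^ (m - H.card)) * (2 * H.card) := by
      have := sum_w_card G.edgeFinset p
      calc 2 * p * (m:ℝ) = 2 * (p * m) := by ring
        _ = 2 * ∑ H ∈ G.edgeFinset.powerset,
              (p ^ H.card * (1 - p) ^ (m - H.card)) * H.card := by rw [this]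
        _ = _ := by rw [Finset.mul_sum]; exact Finset.sum_congr rfl fun H _ => by ring
    have step2 : ∑ H ∈ G.edgeFinset.powerset,
          (p ^ H.card * (1 - p) ^ (m - H.card)) * (2 * H.card)
        ≤ ∑ H ∈ G.edgeFinset.powerset,
            (p ^ H.card * (1 - p) ^ (m - H.card)) *
              (t * n + (Tf.filter (fun x => ∀ e ∈ x.2.2.edges, e ∈ H)).card) := by
      refine Finset.sum_le_sum fun H hH => ?_
      refine mul_le_mul_of_nonneg_left ?_ (wnn H hH)
      exact_mod_cast key H hH
    have step3 : ∑ H ∈ G.edgeFinset.powerset,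
          (p ^ H.card * (1 - p) ^ (m - H.card)) *
            (t * n + (Tf.filter (fun x => ∀ e ∈ x.2.2.edges, e ∈ H)).card)
        = t * n + ∑ H ∈ G.edgeFinset.powerset,
            (p ^ H.card * (1 - p) ^ (m - H.card)) *
              (Tf.filter (fun x => ∀ e ∈ x.2.2.edges, e ∈ H)).card := by
      rw [Finset.sum_congr rfl (fun H _ => mul_add _ _ _), Finset.sum_add_distrib]
      congr 1
      rw [← Finset.sum_mul, sum_w_one, one_mul]
    have step4 : ∑ H ∈ G.edgeFinset.powerset,
          (p ^ H.card * (1 - p) ^ (m - H.card)) *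
            ((Tf.filter (fun x => ∀ e ∈ x.2.2.edges, e ∈ H)).card : ℝ)
        = p ^ t * Tf.card := by
      have hterm : ∀ H ∈ G.edgeFinset.powerset,
          (p ^ H.card * (1 - p) ^ (m - H.card)) *
            ((Tf.filter (fun x => ∀ e ∈ x.2.2.edges, e ∈ H)).card : ℝ)
          = ∑ x ∈ Tf, (if x.2.2.edges.toFinset ⊆ H then
              p ^ H.card * (1 - p) ^ (m - H.card) else 0) := by
        intro H _
        rw [Finset.card_filter]
        push_cast
        rw [Finset.mul_sum]
        refine Finset.sum_congr rfl fun x _ => ?_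
        have hiff : (∀ e ∈ x.2.2.edges, e ∈ H) ↔ x.2.2.edges.toFinset ⊆ H := by
          constructor
          · intro h e he
            exact h e (List.mem_toFinset.mp he)
          · intro h e he
            exact h (List.mem_toFinset.mpr he)
        rw [if_congr hiff.symm rfl rfl]
        split_ifs <;> simp
      rw [Finset.sum_congr rfl hterm, Finset.sum_comm]
      have hx : ∀ x ∈ Tf, ∑ H ∈ G.edgeFinset.powerset,
          (if x.2.2.edges.toFinset ⊆ H then
            p ^ H.card * (1 - p) ^ (m - H.card) else 0) = p ^ t := by
        intro x hxT
        have hxT' : x ∈ T := (Set.Finite.mem_toFinset _).mp hxT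
        have hSE : x.2.2.edges.toFinset ⊆ G.edgeFinset := by
          intro e he
          exact SimpleGraph.mem_edgeFinset.mpr
            (x.2.2.edges_subset_edgeSet (List.mem_toFinset.mp he))
        rw [sum_w_subset G.edgeFinset _ hSE p]
        congr 1
        rw [List.toFinset_card_of_nodup hxT'.1.edges_nodup,
          SimpleGraph.Walk.length_edges, hxT'.2.1]
      rw [Finset.sum_congr rfl hx, Finset.sum_const, nsmul_eq_mul, mul_comm]
    calc 2 * p * (m:ℝ) = _ := step1
      _ ≤ _ := step2
      _ = _ := step3
      _ = t * n + p ^ t * Tf.card := by rw [step4]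
  -- final numerics
  rw [hTcard]
  have hnr : (1:ℝ) ≤ n := by exact_mod_cast hn
  have htr : (1:ℝ) ≤ t := by exact_mod_cast ht1
  have hsr : (s:ℝ) = 2 * t := by exact_mod_cast hst
  have hmtn : (t:ℝ) * n ≤ m := by
    have hn0 : (0:ℝ) < n := by linarith
    have := (le_div_iff₀ hn0).mp hd
    nlinarith
  have hbase : (1:ℝ)/2 * (2*(m:ℝ)/n) / s = m/(2*t*n) := by
    have hn0 : (n:ℝ) ≠ 0 := by positivity
    have ht0 : (t:ℝ) ≠ 0 := by positivity
    rw [hsr]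
    field_simp
    try ring
    try tauto
  rw [hbase]
  rcases le_or_gt (m:ℝ) (2*t*n) with hc | hc
  · have h1 := main 1 zero_le_one le_rfl
    rw [one_pow, one_mul] at h1
    have h1' : 2 * (m:ℝ) ≤ t * n + Tf.card := by linarith [h1]
    have hTn : (n:ℝ) ≤ Tf.card := by nlinarith
    have hb01 : (0:ℝ) ≤ (m:ℝ)/(2*t*n) :=
      div_nonneg (Nat.cast_nonneg _) (mul_nonneg (mul_nonneg zero_le_two (Nat.cast_nonneg _)) (Nat.cast_nonneg _))
    have hb1 : (m:ℝ)/(2*t*n) ≤ 1 := by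
      rw [div_le_one (by positivity)]
      exact hc
    calc (n:ℝ) * ((m:ℝ)/(2*t*n))^t ≤ n * 1 := by
          refine mul_le_mul_of_nonneg_left ?_ (by positivity)
          exact pow_le_one₀ hb01 hb1
      _ ≤ Tf.card := by linarith
  · have hm0 : (0:ℝ) < m := by nlinarith
    set p := 2*(t:ℝ)*n/m with hp
    clear_value p
    have hppos : (0:ℝ) < p := by
      rw [hp]
      apply div_pos _ hm0
      nlinarith
    have hp1 : p ≤ 1 := by
      rw [hp, div_le_one hm0]
      linarith
    have h2 := main p hppos.le hp1
    have h2m : 2 * p * m = 4*(t:ℝ)*n := by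
      rw [hp, mul_assoc, div_mul_cancel₀ _ hm0.ne']
      ring
    rw [h2m] at h2
    have hptpos : (0:ℝ) < p^t := pow_pos hppos t
    have hinv : (m:ℝ)/(2*t*n) = 1/p := by
      rw [hp]
      rw [one_div_div]
    have hnp : (n:ℝ) ≤ p^t * Tf.card := by nlinarith
    have hnp2 : (n:ℝ) ≤ Tf.card * p^t := by
      rw [mul_comm] at hnp
      exact hnp
    rw [hinv]
    calc (n:ℝ) * ((1:ℝ)/p)^t = n / p^t := by
          rw [one_div, inv_pow]
          ring
      _ ≤ Tf.card := by
          rw [div_le_iff₀ hptpos]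
          exact hnp2
end

section
/- Every s-parallel-greedy graph on n vertices has average degree at most C·s·n^{2/s} for an absolute constant C, assuming s is even. -/
open SimpleGraph


open SimpleGraph

namespace PGAux
set_option linter.unusedSectionVars false

open Finset

attribute [local instance] Classical.propDecidable

variable {V : Type} [Fintype V] [DecidableEq V] {k : ℕ}

/-- index of the (unique) matching containing an edge -/
noncomputable def idx {G : SimpleGraph V} (M : Fin k → SimpleGraph V)
    (hcov : ∀ e ∈ G.edgeSet, ∃ i, e ∈ (M i).edgeSet) {u v : V} (h : G.Adj u v) : Fin k :=
  (hcov s(u,v) (G.mem_edgeSet.mpr h)).choose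

lemma idx_adj {G : SimpleGraph V} (M : Fin k → SimpleGraph V)
    (hcov : ∀ e ∈ G.edgeSet, ∃ i, e ∈ (M i).edgeSet) {u v : V} (h : G.Adj u v) :
    (M (idx M hcov h)).Adj u v :=
  (hcov s(u,v) (G.mem_edgeSet.mpr h)).choose_spec

lemma idx_eq_of_adj {G : SimpleGraph V} {M : Fin k → SimpleGraph V}
    (hdisj : Pairwise fun i j => Disjoint (M i).edgeSet (M j).edgeSet)
    (hcov : ∀ e ∈ G.edgeSet, ∃ i, e ∈ (M i).edgeSet) {u v : V} (h : G.Adj u v)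
    {i : Fin k} (hi : (M i).Adj u v) : i = idx M hcov h := by
  by_contra hne
  exact Set.disjoint_left.mp (hdisj hne) ((M i).mem_edgeSet.mpr hi)
    ((M _).mem_edgeSet.mpr (idx_adj M hcov h))

lemma idx_symm {G : SimpleGraph V} {M : Fin k → SimpleGraph V}
    (hdisj : Pairwise fun i j => Disjoint (M i).edgeSet (M j).edgeSet)
    (hcov : ∀ e ∈ G.edgeSet, ∃ i, e ∈ (M i).edgeSet) {u v : V} (h : G.Adj u v) :
    idx M hcov h.symm = idx M hcov h :=
  (idx_eq_of_adj hdisj hcov h.symm ((idx_adj M hcov h).symm)).symm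

/-- endpoint of a walk recorded as a vertex list -/
def endv : List V → V → V
  | [], v => v
  | w :: l, _ => endv l w

/-- `Desc M hcov l b v` : `v :: l` is a walk whose successive edges have strictly
decreasing matching indices, all `< b`. -/
def Desc {G : SimpleGraph V} (M : Fin k → SimpleGraph V)
    (hcov : ∀ e ∈ G.edgeSet, ∃ i, e ∈ (M i).edgeSet) : List V → ℕ → V → Prop
  | [], _, _ => True
  | w :: l, b, v => ∃ h : G.Adj v w, ((idx M hcov h : ℕ) < b) ∧ Desc M hcov l (idx M hcov h) w

variable {G : SimpleGraph V} {M : Fin k → SimpleGraph V}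
  {hcov : ∀ e ∈ G.edgeSet, ∃ i, e ∈ (M i).edgeSet}

lemma desc_mono {l : List V} {b b' : ℕ} {v : V} (hd : Desc M hcov l b v) (hb : b ≤ b') :
    Desc M hcov l b' v := by
  cases l with
  | nil => trivial
  | cons w l => obtain ⟨h, hlt, hdd⟩ := hd; exact ⟨h, lt_of_lt_of_le hlt hb, hdd⟩

/-- a descending walk with indices `< i` gives a walk in the earlier union graph -/
lemma desc_walk (i : Fin k) : ∀ (l : List V) (v : V) (b : ℕ),
    Desc M hcov l b v → b ≤ (i : ℕ) →
    ∃ p : (⨆ j : {j : Fin k // j < i}, M j.1).Walk v (endv l v), p.length = l.length := by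
  intro l
  induction l with
  | nil => exact fun v b _ _ => ⟨Walk.nil, rfl⟩
  | cons w l ih =>
    rintro v b ⟨h, hlt, hd⟩ hbi
    have hji : idx M hcov h < i := by
      have : (idx M hcov h : ℕ) < (i : ℕ) := lt_of_lt_of_le hlt hbi
      exact this
    have hadj : (⨆ j : {j : Fin k // j < i}, M j.1).Adj v w := by
      have hle := le_iSup (fun j : {j : Fin k // j < i} => M j.1) ⟨_, hji⟩
      exact hle (idx_adj M hcov h)
    obtain ⟨p, hp⟩ := ih w (idx M hcov h) hd (le_of_lt (lt_of_lt_of_le hlt hbi))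
    exact ⟨Walk.cons hadj p, congrArg (· + 1) hp⟩

section Greedy

variable {s : ℕ}
  (hgr : ∀ i : Fin k, ∀ u v : V, (M i).Adj u v →
    ∀ p : (⨆ j : {j : Fin k // j < i}, M j.1).Walk u v, s < p.length)

include hgr

/-- crossing two descending walks below a common edge contradicts greediness -/
lemma cross_absurd {v w₂ : V} (h₂ : G.Adj v w₂) (l₁ l₂ : List V)
    (hd₁ : Desc M hcov l₁ (idx M hcov h₂ : ℕ) v)
    (hd₂ : Desc M hcov l₂ (idx M hcov h₂ : ℕ) w₂)
    (hend : endv l₁ v = endv l₂ w₂)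
    (hlen : l₁.length + l₂.length + 1 ≤ s) : False := by
  obtain ⟨p₁, hp₁⟩ := desc_walk (idx M hcov h₂) l₁ v _ hd₁ le_rfl
  obtain ⟨p₂, hp₂⟩ := desc_walk (idx M hcov h₂) l₂ w₂ _ hd₂ le_rfl
  have hplen : (p₁.append ((p₂.reverse).copy hend.symm rfl)).length
      = l₁.length + l₂.length := by
    simp [Walk.length_append, Walk.length_copy, Walk.length_reverse, hp₁, hp₂]
  have := hgr (idx M hcov h₂) v w₂ (idx_adj M hcov h₂)
    (p₁.append ((p₂.reverse).copy hend.symm rfl))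
  omega

/-- dispersion: descending walks with given endpoints and bounded total length are unique -/
lemma disp (hdisj : Pairwise fun i j => Disjoint (M i).edgeSet (M j).edgeSet)
    (hmatch : ∀ i, ∀ v u w : V, (M i).Adj v u → (M i).Adj v w → u = w) :
    ∀ (l₁ l₂ : List V) (v : V) (b₁ b₂ : ℕ),
    Desc M hcov l₁ b₁ v → Desc M hcov l₂ b₂ v → endv l₁ v = endv l₂ v →
    l₁.length + l₂.length ≤ s → l₁ = l₂ := by
  intro l₁
  induction l₁ with
  | nil =>
    intro l₂ v b₁ b₂ _ hd₂ hend hlen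
    cases l₂ with
    | nil => rfl
    | cons w₂ l₂' =>
      exfalso
      obtain ⟨h₂, _, hdd₂⟩ := hd₂
      exact cross_absurd hgr h₂ [] l₂' trivial hdd₂ hend (by simp at hlen ⊢; omega)
  | cons w₁ l₁' ih =>
    intro l₂ v b₁ b₂ hd₁ hd₂ hend hlen
    obtain ⟨h₁, hb₁, hdd₁⟩ := hd₁
    cases l₂ with
    | nil =>
      exfalso
      exact cross_absurd hgr h₁ [] l₁' trivial hdd₁ hend.symm (by simp at hlen ⊢; omega)
    | cons w₂ l₂' =>
      obtain ⟨h₂, hb₂, hdd₂⟩ := hd₂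
      by_cases hw : w₁ = w₂
      · subst hw
        have hpe : h₁ = h₂ := rfl
        subst hpe
        have heq : l₁' = l₂' := by
          refine ih l₂' w₁ _ _ hdd₁ hdd₂ hend (by simp at hlen ⊢; omega)
        rw [heq]
      · exfalso
        have hne : idx M hcov h₁ ≠ idx M hcov h₂ := by
          intro he
          exact hw (hmatch (idx M hcov h₂) v w₁ w₂ (he ▸ idx_adj M hcov h₁) (idx_adj M hcov h₂))
        rcases lt_or_gt_of_ne hne with hlt | hgt
        · exact cross_absurd hgr h₂ (w₁ :: l₁') l₂' ⟨h₁, hlt, hdd₁⟩ hdd₂ hend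
            (by simp at hlen ⊢; omega)
        · exact cross_absurd hgr h₁ (w₂ :: l₂') l₁' ⟨h₂, hgt, hdd₂⟩ hdd₁ hend.symm
            (by simp at hlen ⊢; omega)

end Greedy

/-- finset of descending walks of length `τ`, indices `< b`, starting at `v` -/
noncomputable def WFin (G : SimpleGraph V) (M : Fin k → SimpleGraph V)
    (hcov : ∀ e ∈ G.edgeSet, ∃ i, e ∈ (M i).edgeSet) :
    ℕ → ℕ → V → Finset (List V)
  | 0, _, _ => {[]}
  | τ+1, b, v => Finset.univ.biUnion fun w =>
      if h : G.Adj v w then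
        (if (idx M hcov h : ℕ) < b then (WFin G M hcov τ (idx M hcov h) w).image (w :: ·) else ∅)
      else ∅

lemma wfin_spec : ∀ (τ b : ℕ) (v : V) (l : List V), l ∈ WFin G M hcov τ b v →
    Desc M hcov l b v ∧ l.length = τ := by
  intro τ
  induction τ with
  | zero =>
    intro b v l hl
    simp [WFin] at hl
    subst hl
    exact ⟨trivial, rfl⟩
  | succ τ ih =>
    intro b v l hl
    simp only [WFin, Finset.mem_biUnion, Finset.mem_univ, true_and] at hl
    obtain ⟨w, hw⟩ := hl
    by_cases h : G.Adj v w
    · rw [dif_pos h] at hw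
      by_cases hb : (idx M hcov h : ℕ) < b
      · rw [if_pos hb] at hw
        obtain ⟨l', hl', rfl⟩ := Finset.mem_image.mp hw
        obtain ⟨hd, hlen⟩ := ih _ _ _ hl'
        exact ⟨⟨h, hb, hd⟩, by simp [hlen]⟩
      · rw [if_neg hb] at hw; simp at hw
    · rw [dif_neg h] at hw; simp at hw

/-- rich directed edges -/
noncomputable def Rich (G : SimpleGraph V) (M : Fin k → SimpleGraph V)
    (hcov : ∀ e ∈ G.edgeSet, ∃ i, e ∈ (M i).edgeSet) (lam : ℕ) : ℕ → Finset (V × V)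
  | 0 => Finset.univ.filter fun d => G.Adj d.1 d.2
  | τ+1 => Finset.univ.filter fun d => ∃ h : G.Adj d.1 d.2,
      lam ≤ (Finset.univ.filter fun w => ∃ h' : G.Adj d.2 w,
        (idx M hcov h' : ℕ) < (idx M hcov h : ℕ) ∧ (d.2, w) ∈ Rich G M hcov lam τ).card

lemma rich_adj {lam τ : ℕ} {d : V × V} (hd : d ∈ Rich G M hcov lam τ) : G.Adj d.1 d.2 := by
  cases τ with
  | zero => exact (Finset.mem_filter.mp hd).2
  | succ τ => exact (Finset.mem_filter.mp hd).2.choose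

lemma rich_wfin {lam : ℕ} : ∀ (τ : ℕ) (u v : V) (h : G.Adj u v),
    (u, v) ∈ Rich G M hcov lam τ →
    lam ^ τ ≤ (WFin G M hcov τ (idx M hcov h : ℕ) v).card := by
  intro τ
  induction τ with
  | zero => intro u v h _; simp [WFin]
  | succ τ ih =>
    intro u v h hr
    obtain ⟨hadj, hA⟩ := (Finset.mem_filter.mp hr).2
    have hA : lam ≤ (Finset.univ.filter fun w => ∃ h' : G.Adj v w,
        (idx M hcov h' : ℕ) < (idx M hcov h : ℕ) ∧ (v, w) ∈ Rich G M hcov lam τ).card := hA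
    set A := Finset.univ.filter fun w => ∃ h' : G.Adj v w,
        (idx M hcov h' : ℕ) < (idx M hcov h : ℕ) ∧ (v, w) ∈ Rich G M hcov lam τ with hAdef
    set f : V → Finset (List V) := fun w =>
      if hw : G.Adj v w then
        (if (idx M hcov hw : ℕ) < (idx M hcov h : ℕ) then
          (WFin G M hcov τ (idx M hcov hw) w).image (w :: ·) else ∅)
      else ∅ with hf
    have hW : WFin G M hcov (τ+1) (idx M hcov h : ℕ) v = Finset.univ.biUnion f := rfl
    have hhead : ∀ (w : V) (l : List V), l ∈ f w → l.head? = some w := by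
      intro w l hl
      rw [hf] at hl
      by_cases hax : G.Adj v w
      · simp only [dif_pos hax] at hl
        by_cases hbx : (idx M hcov hax : ℕ) < (idx M hcov h : ℕ)
        · rw [if_pos hbx] at hl
          obtain ⟨l', _, rfl⟩ := Finset.mem_image.mp hl
          rfl
        · rw [if_neg hbx] at hl; simp at hl
      · simp only [dif_neg hax] at hl; simp at hl
    have hdisjf : ∀ x ∈ Finset.univ, ∀ y ∈ (Finset.univ : Finset V), x ≠ y →
        Disjoint (f x) (f y) := by
      intro x _ y _ hxy
      refine Finset.disjoint_left.mpr fun l hlx hly => ?_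
      exact hxy (Option.some_injective _ ((hhead x l hlx).symm.trans (hhead y l hly)))
    have h1 : ∀ w ∈ A, lam ^ τ ≤ (f w).card := by
      intro w hw
      obtain ⟨h', hlt, hrich⟩ := (Finset.mem_filter.mp hw).2
      rw [hf]
      simp only [dif_pos h']
      rw [if_pos hlt, Finset.card_image_of_injective _ (fun a b hab => by simpa using hab)]
      exact ih v w h' hrich
    calc lam ^ (τ + 1) = lam * lam ^ τ := by ring
    _ ≤ A.card * lam ^ τ := Nat.mul_le_mul_right _ hA
    _ = A.card • lam ^ τ := (smul_eq_mul _ _).symm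
    _ ≤ ∑ w ∈ A, (f w).card := Finset.card_nsmul_le_sum A _ _ h1
    _ ≤ ∑ w ∈ Finset.univ, (f w).card :=
        Finset.sum_le_sum_of_subset (Finset.subset_univ A)
    _ = (WFin G M hcov (τ+1) (idx M hcov h : ℕ) v).card := by
        rw [hW, Finset.card_biUnion hdisjf]

lemma order_lem {α : Type*} (S : Finset α) (f : α → ℕ) (hf : Set.InjOn f S) (lam : ℕ) :
    S.card ≤ (S.filter fun a => lam ≤ (S.filter fun b => f b < f a).card).card + lam := by
  classical
  set c : α → ℕ := fun a => (S.filter fun b => f b < f a).card with hc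
  have hpart := Finset.card_filter_add_card_filter_not
    (s := S) (p := fun a => lam ≤ c a)
  have hmono : ∀ a ∈ S, ∀ a' ∈ S, f a < f a' → c a < c a' := by
    intro a ha a' ha' hlt
    apply Finset.card_lt_card
    constructor
    · intro b hb
      rw [Finset.mem_filter] at hb ⊢
      exact ⟨hb.1, hb.2.trans hlt⟩
    · intro hts
      have : a ∈ S.filter fun b => f b < f a := hts (Finset.mem_filter.mpr ⟨ha, hlt⟩)
      simp at this
  have hinj : Set.InjOn c (S.filter fun a => ¬ lam ≤ c a) := by
    intro a ha a' ha' hca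
    simp only [Finset.coe_filter, Set.mem_setOf_eq] at ha ha'
    by_contra hne
    have hfne : f a ≠ f a' := fun he => hne (hf ha.1 ha'.1 he)
    rcases lt_or_gt_of_ne hfne with hlt | hlt
    · exact absurd hca (Nat.ne_of_lt (hmono _ ha.1 _ ha'.1 hlt))
    · exact absurd hca.symm (Nat.ne_of_lt (hmono _ ha'.1 _ ha.1 hlt))
  have hcard : (S.filter fun a => ¬ lam ≤ c a).card ≤ lam := by
    have := Finset.card_le_card_of_injOn c
      (fun a ha => Finset.mem_range.mpr
        (Nat.lt_of_not_le (Finset.mem_filter.mp ha).2)) hinj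
    simpa using this
  show S.card ≤ (S.filter fun a => lam ≤ c a).card + lam
  omega

lemma rich_card_step
    (hdisj : Pairwise fun i j => Disjoint (M i).edgeSet (M j).edgeSet)
    (hmatch : ∀ i, ∀ v u w : V, (M i).Adj v u → (M i).Adj v w → u = w)
    (lam τ : ℕ) :
    (Rich G M hcov lam τ).card ≤ (Rich G M hcov lam (τ+1)).card + (Fintype.card V) * lam := by
  classical
  have hfst : (Rich G M hcov lam τ).card
      = ∑ v : V, (Finset.univ.filter fun w => (v, w) ∈ Rich G M hcov lam τ).card := by
    rw [Finset.card_eq_sum_card_fiberwise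
      (f := Prod.fst) (t := Finset.univ) (fun x _ => Finset.mem_univ _)]
    refine Finset.sum_congr rfl fun v _ => ?_
    refine Finset.card_bij (fun d _ => d.2) ?_ ?_ ?_
    · intro d hd
      rw [Finset.mem_filter] at hd ⊢
      refine ⟨Finset.mem_univ _, ?_⟩
      have : d = (v, d.2) := by
        rw [← hd.2]
      rw [← this]; exact hd.1
    · intro d hd d' hd' he
      rw [Finset.mem_filter] at hd hd'
      exact Prod.ext (hd.2.trans hd'.2.symm) he
    · intro w hw
      rw [Finset.mem_filter] at hw
      exact ⟨(v, w), Finset.mem_filter.mpr ⟨hw.2, rfl⟩, rfl⟩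
  have hsnd : (Rich G M hcov lam (τ+1)).card
      = ∑ v : V, (Finset.univ.filter fun u => (u, v) ∈ Rich G M hcov lam (τ+1)).card := by
    rw [Finset.card_eq_sum_card_fiberwise
      (f := Prod.snd) (t := Finset.univ) (fun x _ => Finset.mem_univ _)]
    refine Finset.sum_congr rfl fun v _ => ?_
    refine Finset.card_bij (fun d _ => d.1) ?_ ?_ ?_
    · intro d hd
      rw [Finset.mem_filter] at hd ⊢
      refine ⟨Finset.mem_univ _, ?_⟩
      have : d = (d.1, v) := by
        rw [← hd.2]
      rw [← this]; exact hd.1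
    · intro d hd d' hd' he
      rw [Finset.mem_filter] at hd hd'
      exact Prod.ext he (hd.2.trans hd'.2.symm)
    · intro u hu
      rw [Finset.mem_filter] at hu
      exact ⟨(u, v), Finset.mem_filter.mpr ⟨hu.2, rfl⟩, rfl⟩
  rw [hfst, hsnd]
  have key : ∀ v : V,
      (Finset.univ.filter fun w => (v, w) ∈ Rich G M hcov lam τ).card ≤
      (Finset.univ.filter fun u => (u, v) ∈ Rich G M hcov lam (τ+1)).card + lam := by
    intro v
    set S := Finset.univ.filter fun w => (v, w) ∈ Rich G M hcov lam τ with hS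
    set f : V → ℕ := fun w => if hw : G.Adj v w then (idx M hcov hw : ℕ) else 0 with hfdef
    have hfval : ∀ (w : V) (h' : G.Adj v w), f w = (idx M hcov h' : ℕ) := by
      intro w h'
      rw [hfdef]
      exact dif_pos h'
    have hSadj : ∀ w ∈ S, G.Adj v w := by
      intro w hw
      exact rich_adj (Finset.mem_filter.mp hw).2
    have hinj : Set.InjOn f S := by
      intro w hw w' hw' he
      have hw1 : w ∈ S := hw
      have hw2 : w' ∈ S := hw'
      have h1 : G.Adj v w := hSadj w hw1
      have h2 : G.Adj v w' := hSadj w' hw2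
      rw [hfval w h1, hfval w' h2] at he
      have : idx M hcov h1 = idx M hcov h2 := Fin.ext he
      exact hmatch (idx M hcov h2) v w w' (this ▸ idx_adj M hcov h1) (idx_adj M hcov h2)
    have horder := order_lem S f hinj lam
    have hsub : (S.filter fun a => lam ≤ (S.filter fun b => f b < f a).card) ⊆
        (Finset.univ.filter fun u => (u, v) ∈ Rich G M hcov lam (τ+1)) := by
      intro w hw
      rw [Finset.mem_filter] at hw
      obtain ⟨hwS, hwc⟩ := hw
      have hvw : G.Adj v w := hSadj w hwS
      simp only [Rich, Finset.mem_filter, Finset.mem_univ, true_and]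
      refine ⟨hvw.symm, le_trans hwc (Finset.card_le_card ?_)⟩
      intro w' hw'
      rw [Finset.mem_filter] at hw'
      obtain ⟨hw'S, hw'lt⟩ := hw'
      have h' : G.Adj v w' := hSadj w' (by exact hw'S)
      have hmem : (v, w') ∈ Rich G M hcov lam τ := (Finset.mem_filter.mp hw'S).2
      refine Finset.mem_filter.mpr ⟨Finset.mem_univ _, ⟨h', ?_, hmem⟩⟩
      rw [hfval w' h', hfval w hvw] at hw'lt
      rw [idx_symm hdisj hcov hvw]
      exact hw'lt
    have := Finset.card_le_card hsub
    omega
  calc ∑ v : V, (Finset.univ.filter fun w => (v, w) ∈ Rich G M hcov lam τ).card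
      ≤ ∑ v : V, ((Finset.univ.filter fun u => (u, v) ∈ Rich G M hcov lam (τ+1)).card + lam) :=
        Finset.sum_le_sum fun v _ => key v
    _ = (∑ v : V, (Finset.univ.filter fun u => (u, v) ∈ Rich G M hcov lam (τ+1)).card)
        + (Fintype.card V) * lam := by
        rw [Finset.sum_add_distrib]
        simp [Finset.card_univ, mul_comm]

lemma mem_rich_zero {lam : ℕ} {d : V × V} (h : G.Adj d.1 d.2) : d ∈ Rich G M hcov lam 0 :=
  Finset.mem_filter.mpr ⟨Finset.mem_univ _, h⟩

lemma rich_card_zero [DecidableRel G.Adj] (lam : ℕ) :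
    (Rich G M hcov lam 0).card = 2 * G.edgeFinset.card := by
  classical
  have h1 : (Rich G M hcov lam 0).card = ∑ v : V, G.degree v := by
    rw [Finset.card_eq_sum_card_fiberwise
      (f := Prod.fst) (t := Finset.univ) (fun x _ => Finset.mem_univ _)]
    refine Finset.sum_congr rfl fun v _ => ?_
    rw [← SimpleGraph.card_neighborFinset_eq_degree]
    refine Finset.card_bij (fun d _ => d.2) ?_ ?_ ?_
    · intro d hd
      obtain ⟨hd0, hfst⟩ := Finset.mem_filter.mp hd
      have hadj : G.Adj d.1 d.2 := rich_adj hd0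
      rw [SimpleGraph.mem_neighborFinset]
      exact hfst ▸ hadj
    · intro d hd d' hd' he
      obtain ⟨_, h1⟩ := Finset.mem_filter.mp hd
      obtain ⟨_, h2⟩ := Finset.mem_filter.mp hd'
      exact Prod.ext (h1.trans h2.symm) he
    · intro w hw
      rw [SimpleGraph.mem_neighborFinset] at hw
      exact ⟨(v, w), Finset.mem_filter.mpr ⟨mem_rich_zero hw, rfl⟩, rfl⟩
  rw [h1, SimpleGraph.sum_degrees_eq_twice_card_edges]

/-- fiberwise count of rich edges -/
lemma rich_fiber_fst (lam τ : ℕ) : (Rich G M hcov lam τ).card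
    = ∑ v : V, (Finset.univ.filter fun w => (v, w) ∈ Rich G M hcov lam τ).card := by
  classical
  rw [Finset.card_eq_sum_card_fiberwise
    (f := Prod.fst) (t := Finset.univ) (fun x _ => Finset.mem_univ _)]
  refine Finset.sum_congr rfl fun v _ => ?_
  refine Finset.card_bij (fun d _ => d.2) ?_ ?_ ?_
  · intro d hd
    obtain ⟨hd0, hfst⟩ := Finset.mem_filter.mp hd
    rw [Finset.mem_filter]
    refine ⟨Finset.mem_univ _, ?_⟩
    have : d = (v, d.2) := by rw [← hfst]
    rw [← this]; exact hd0
  · intro d hd d' hd' he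
    obtain ⟨_, h1⟩ := Finset.mem_filter.mp hd
    obtain ⟨_, h2⟩ := Finset.mem_filter.mp hd'
    exact Prod.ext (h1.trans h2.symm) he
  · intro w hw
    exact ⟨(v, w), Finset.mem_filter.mpr ⟨(Finset.mem_filter.mp hw).2, rfl⟩, rfl⟩

/-- the master counting inequality -/
lemma count_le
    (hgr : ∀ i : Fin k, ∀ u v : V, (M i).Adj u v →
      ∀ p : (⨆ j : {j : Fin k // j < i}, M j.1).Walk u v, s < p.length)
    (hdisj : Pairwise fun i j => Disjoint (M i).edgeSet (M j).edgeSet)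
    (hmatch : ∀ i, ∀ v u w : V, (M i).Adj v u → (M i).Adj v w → u = w)
    (lam t : ℕ) (ht : 1 ≤ t) (hts : t + t ≤ s) :
    (Rich G M hcov lam (t-1)).card * lam ^ (t-1) ≤ Fintype.card V * Fintype.card V := by
  classical
  set TW : Finset (V × List V) :=
    Finset.univ.biUnion (fun v => (WFin G M hcov t (k : ℕ) v).image fun l => (v, l)) with hTW
  have hup : TW.card ≤ Fintype.card V * Fintype.card V := by
    have hmaps : ∀ q ∈ TW, (q.1, endv q.2 q.1) ∈
        (Finset.univ ×ˢ (Finset.univ : Finset V)) := fun q _ =>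
      Finset.mem_product.mpr ⟨Finset.mem_univ _, Finset.mem_univ _⟩
    have hinj : Set.InjOn (fun q : V × List V => (q.1, endv q.2 q.1)) TW := by
      intro q hq q' hq' he
      obtain ⟨v, -, hv⟩ := Finset.mem_biUnion.mp hq
      obtain ⟨l, hl, rfl⟩ := Finset.mem_image.mp hv
      obtain ⟨v', -, hv'⟩ := Finset.mem_biUnion.mp hq'
      obtain ⟨l', hl', rfl⟩ := Finset.mem_image.mp hv'
      simp only [Prod.mk.injEq] at he
      obtain ⟨hvv, hend⟩ := he
      subst hvv
      obtain ⟨hd, hlen⟩ := wfin_spec t (k : ℕ) v l hl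
      obtain ⟨hd', hlen'⟩ := wfin_spec t (k : ℕ) v l' hl'
      have : l = l' := disp hgr hdisj hmatch l l' v (k : ℕ) (k : ℕ) hd hd' hend (by omega)
      rw [this]
    calc TW.card ≤ (Finset.univ ×ˢ (Finset.univ : Finset V)).card :=
          Finset.card_le_card_of_injOn _ hmaps hinj
      _ = Fintype.card V * Fintype.card V := by
          rw [Finset.card_product]; simp
  refine le_trans ?_ hup
  have hdisjTW : ∀ x ∈ (Finset.univ : Finset V), ∀ y ∈ (Finset.univ : Finset V), x ≠ y →
      Disjoint ((WFin G M hcov t (k : ℕ) x).image fun l => (x, l))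
        ((WFin G M hcov t (k : ℕ) y).image fun l => (y, l)) := by
    intro x _ y _ hxy
    refine Finset.disjoint_left.mpr fun q hqx hqy => ?_
    obtain ⟨l, _, rfl⟩ := Finset.mem_image.mp hqx
    obtain ⟨l', _, he⟩ := Finset.mem_image.mp hqy
    exact hxy (congrArg Prod.fst he).symm
  have hTWcard : TW.card = ∑ v : V, (WFin G M hcov t (k : ℕ) v).card := by
    rw [hTW, Finset.card_biUnion hdisjTW]
    exact Finset.sum_congr rfl fun v _ =>
      Finset.card_image_of_injective _ (fun a b hab => (Prod.mk.injEq _ _ _ _).mp hab |>.2)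
  have hper : ∀ v : V,
      (Finset.univ.filter fun w => (v, w) ∈ Rich G M hcov lam (t-1)).card * lam ^ (t-1)
        ≤ (WFin G M hcov t (k : ℕ) v).card := by
    intro v
    set A := Finset.univ.filter fun w => (v, w) ∈ Rich G M hcov lam (t-1) with hA
    set f : V → Finset (List V) := fun w =>
      if hw : G.Adj v w then
        (if (idx M hcov hw : ℕ) < (k : ℕ) then
          (WFin G M hcov (t-1) (idx M hcov hw) w).image (w :: ·) else ∅)
      else ∅ with hf
    have htt : t = (t-1) + 1 := by omega
    have hW : WFin G M hcov t (k : ℕ) v = Finset.univ.biUnion f := by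
      rw [htt]
      rfl
    have hhead : ∀ (w : V) (l : List V), l ∈ f w → l.head? = some w := by
      intro w l hl
      rw [hf] at hl
      by_cases hax : G.Adj v w
      · simp only [dif_pos hax] at hl
        by_cases hbx : (idx M hcov hax : ℕ) < (k : ℕ)
        · rw [if_pos hbx] at hl
          obtain ⟨l', _, rfl⟩ := Finset.mem_image.mp hl
          rfl
        · rw [if_neg hbx] at hl; simp at hl
      · simp only [dif_neg hax] at hl; simp at hl
    have hdisjf : ∀ x ∈ (Finset.univ : Finset V), ∀ y ∈ (Finset.univ : Finset V), x ≠ y →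
        Disjoint (f x) (f y) := by
      intro x _ y _ hxy
      refine Finset.disjoint_left.mpr fun l hlx hly => ?_
      exact hxy (Option.some_injective _ ((hhead x l hlx).symm.trans (hhead y l hly)))
    have h1 : ∀ w ∈ A, lam ^ (t-1) ≤ (f w).card := by
      intro w hw
      have hmem : (v, w) ∈ Rich G M hcov lam (t-1) := (Finset.mem_filter.mp hw).2
      have h' : G.Adj v w := rich_adj hmem
      rw [hf]
      simp only [dif_pos h']
      rw [if_pos (idx M hcov h').isLt,
        Finset.card_image_of_injective _ (fun a b hab => by simpa using hab)]
      exact rich_wfin (t-1) v w h' hmem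
    calc A.card * lam ^ (t-1) = A.card • lam ^ (t-1) := (smul_eq_mul _ _).symm
      _ ≤ ∑ w ∈ A, (f w).card := Finset.card_nsmul_le_sum A _ _ h1
      _ ≤ ∑ w ∈ Finset.univ, (f w).card :=
          Finset.sum_le_sum_of_subset (Finset.subset_univ A)
      _ = (WFin G M hcov t (k : ℕ) v).card := by rw [hW, Finset.card_biUnion hdisjf]
  calc (Rich G M hcov lam (t-1)).card * lam ^ (t-1)
      = (∑ v : V, (Finset.univ.filter fun w => (v, w) ∈ Rich G M hcov lam (t-1)).card)
          * lam ^ (t-1) := by rw [rich_fiber_fst]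
    _ = ∑ v : V, (Finset.univ.filter fun w => (v, w) ∈ Rich G M hcov lam (t-1)).card
          * lam ^ (t-1) := Finset.sum_mul _ _ _
    _ ≤ ∑ v : V, (WFin G M hcov t (k : ℕ) v).card := Finset.sum_le_sum fun v _ => hper v
    _ = TW.card := hTWcard.symm


lemma rich_lower [DecidableRel G.Adj]
    (hdisj : Pairwise fun i j => Disjoint (M i).edgeSet (M j).edgeSet)
    (hmatch : ∀ i, ∀ v u w : V, (M i).Adj v u → (M i).Adj v w → u = w)
    (lam : ℕ) : ∀ τ : ℕ,
    2 * G.edgeFinset.card ≤ (Rich G M hcov lam τ).card + τ * (Fintype.card V * lam) := by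
  intro τ
  induction τ with
  | zero => rw [rich_card_zero]; omega
  | succ τ ih =>
    have hstep := rich_card_step (hcov := hcov) hdisj hmatch lam τ
    have h2 : (τ+1) * (Fintype.card V * lam)
        = τ * (Fintype.card V * lam) + Fintype.card V * lam := by ring
    omega

end PGAux

set_option maxHeartbeats 2000000 in
/-- There is an absolute constant `C` such that every `s`-parallel-greedy graph on `n`
vertices (`s` even) has average degree `2m/n` at most `C·s·n^(2/s)`. -/
theorem parallel_greedy_average_degree :
    ∃ C : ℝ, 0 < C ∧
      ∀ (V : Type) [Fintype V] [DecidableEq V] (G : SimpleGraph V) [DecidableRel G.Adj]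
        (s k : ℕ) (M : Fin k → SimpleGraph V), IsParallelGreedy G s k M → 2 ≤ s → Even s →
        2 * G.edgeFinset.card / Fintype.card V ≤
          C * s * (Fintype.card V : ℝ) ^ ((2 : ℝ) / s) := by
  classical
  refine ⟨4, by norm_num, ?_⟩
  intro V _inst1 _inst2 G _inst3 s k M H hs2 hse
  obtain ⟨hle, hcov, hdisj, hmatch, hgr⟩ := H
  obtain ⟨t, hst⟩ := hse
  have ht1 : 1 ≤ t := by omega
  by_cases hn0 : Fintype.card V = 0
  · -- no vertices: both sides are zero
    have hV : IsEmpty V := Fintype.card_eq_zero_iff.mp hn0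
    have hSym : IsEmpty (Sym2 V) := ⟨fun e => Sym2.ind (fun x _ => hV.elim x) e⟩
    have he : G.edgeFinset.card = 0 := by
      rw [Finset.card_eq_zero]
      exact Finset.eq_empty_iff_forall_notMem.mpr fun e _ => (hSym.false e).elim
    rw [hn0, he]
    have hsne : (2:ℝ)/(s:ℝ) ≠ 0 := by
      have : (0:ℝ) < (s:ℝ) := by exact_mod_cast (by omega : 0 < s)
      positivity
    rw [Nat.cast_zero, Real.zero_rpow hsne]
    norm_num
  -- main case
  have hn1 : 1 ≤ Fintype.card V := Nat.one_le_iff_ne_zero.mpr hn0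
  set n := Fintype.card V with hn
  set E := G.edgeFinset.card with hE
  have hN1 : (1:ℝ) ≤ (n:ℝ) := by exact_mod_cast hn1
  have hT1 : (1:ℝ) ≤ (t:ℝ) := by exact_mod_cast ht1
  have hN0 : (0:ℝ) < (n:ℝ) := by linarith
  have hT0 : (0:ℝ) < (t:ℝ) := by linarith
  have hsT : (s:ℝ) = 2*(t:ℝ) := by
    rw [hst]; push_cast; ring
  have hexp : (2:ℝ)/(s:ℝ) = 1/(t:ℝ) := by
    rw [hsT]
    rw [div_eq_div_iff (by linarith : (2:ℝ)*(t:ℝ) ≠ 0) (ne_of_gt hT0)]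
    ring
  have hrpow1 : (1:ℝ) ≤ (n:ℝ) ^ ((2:ℝ)/(s:ℝ)) := by
    have := Real.rpow_le_rpow_of_exponent_le hN1
      (le_of_lt (show (0:ℝ) < (2:ℝ)/(s:ℝ) by rw [hexp]; positivity))
    simpa using this
  by_cases hD : 2 * E ≤ 8 * t * n
  · -- small average degree
    have h8 : 2*(E:ℝ)/(n:ℝ) ≤ 8*(t:ℝ) := by
      rw [div_le_iff₀ hN0]
      exact_mod_cast hD
    calc 2*(E:ℝ)/(n:ℝ) ≤ 8*(t:ℝ) := h8
      _ = 4*(s:ℝ)*1 := by rw [hsT]; ring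
      _ ≤ 4*(s:ℝ)*((n:ℝ) ^ ((2:ℝ)/(s:ℝ))) := by
          have hs0 : (0:ℝ) ≤ 4*(s:ℝ) := by positivity
          exact mul_le_mul_of_nonneg_left hrpow1 hs0
  · -- large average degree
    push_neg at hD
    set lam := (2*E) / (4*t*n) with hlam
    have hmpos : 0 < 4*t*n := by
      have htp : 0 < t := by omega
      have hnp : 0 < n := by omega
      exact Nat.mul_pos (Nat.mul_pos (by norm_num) htp) hnp
    have hdm : 4*t*n*lam ≤ 2*E := by
      rw [hlam, mul_comm]
      exact Nat.div_mul_le_self _ _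
    have hdm2 : 2*E < 4*t*n*(lam+1) := by
      have hmod := Nat.div_add_mod (2*E) (4*t*n)
      rw [← hlam] at hmod
      have hmlt := Nat.mod_lt (2*E) hmpos
      have hdist : 4*t*n*(lam+1) = 4*t*n*lam + 4*t*n := by ring
      omega
    have hcount := PGAux.count_le (hcov := hcov) hgr hdisj hmatch lam t ht1 (by omega)
    have hlow := PGAux.rich_lower (hcov := hcov) hdisj hmatch lam (t-1)
    set R := (PGAux.Rich G M hcov lam (t-1)).card with hR
    -- move to the reals
    set x : ℝ := (2*(E:ℝ))/(8*(t:ℝ)*(n:ℝ)) with hx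
    have h8TN : (0:ℝ) < 8*(t:ℝ)*(n:ℝ) := by positivity
    have hDr : 8*(t:ℝ)*(n:ℝ) < 2*(E:ℝ) := by exact_mod_cast hD
    have hx1 : (1:ℝ) ≤ x := by
      rw [hx, le_div_iff₀ h8TN]
      linarith
    have hx0 : (0:ℝ) ≤ x := by linarith
    have hDx : 2*(E:ℝ) = 8*(t:ℝ)*(n:ℝ)*x := by
      rw [hx]
      field_simp
    have hlamlb : x ≤ (lam:ℝ) := by
      have hc : 2*(E:ℝ) < 4*(t:ℝ)*(n:ℝ)*((lam:ℝ)+1) := by exact_mod_cast hdm2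
      nlinarith [hx1, hT0, hN0]
    have hlamub : (t:ℝ)*(n:ℝ)*(lam:ℝ) ≤ 2*(E:ℝ)/4 := by
      have hc : 4*(t:ℝ)*(n:ℝ)*(lam:ℝ) ≤ 2*(E:ℝ) := by exact_mod_cast hdm
      linarith
    have hRlb : 3/4*(2*(E:ℝ)) ≤ (R:ℝ) := by
      have hc : 2*(E:ℝ) ≤ (R:ℝ) + ((t-1 : ℕ):ℝ)*((n:ℝ)*(lam:ℝ)) := by exact_mod_cast hlow
      have ht' : ((t-1 : ℕ):ℝ) ≤ (t:ℝ) := by exact_mod_cast (by omega : t - 1 ≤ t)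
      have hnl : (0:ℝ) ≤ (n:ℝ)*(lam:ℝ) := by positivity
      nlinarith
    have hcountR : (R:ℝ) * (lam:ℝ)^(t-1) ≤ (n:ℝ)*(n:ℝ) := by exact_mod_cast hcount
    have hpow : x^(t-1) ≤ (lam:ℝ)^(t-1) := pow_le_pow_left₀ hx0 hlamlb _
    have hkey : 3/4*(2*(E:ℝ)) * x^(t-1) ≤ (n:ℝ)*(n:ℝ) := by
      have h1 : 3/4*(2*(E:ℝ)) * x^(t-1) ≤ (R:ℝ) * (lam:ℝ)^(t-1) := by
        have hxp0 : (0:ℝ) ≤ x^(t-1) := pow_nonneg hx0 _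
        have hR0 : (0:ℝ) ≤ (R:ℝ) := Nat.cast_nonneg _
        exact mul_le_mul hRlb hpow hxp0 hR0
      linarith
    have hxt : x^t ≤ (n:ℝ) := by
      have hsplit : x^t = x * x^(t-1) := by
        conv_lhs => rw [show t = (t-1)+1 by omega]
        rw [pow_succ]
        ring
      have h6 : 6*(t:ℝ)*(n:ℝ)*x^t ≤ (n:ℝ)*(n:ℝ) := by
        calc 6*(t:ℝ)*(n:ℝ)*x^t = 3/4*(2*(E:ℝ)) * x^(t-1) := by
              rw [hsplit, hDx]; ring
          _ ≤ (n:ℝ)*(n:ℝ) := hkey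
      have h7 : 6*(t:ℝ)*x^t ≤ (n:ℝ) := by
        have h6' : (6*(t:ℝ)*x^t)*(n:ℝ) ≤ (n:ℝ)*(n:ℝ) := by
          calc (6*(t:ℝ)*x^t)*(n:ℝ) = 6*(t:ℝ)*(n:ℝ)*x^t := by ring
            _ ≤ (n:ℝ)*(n:ℝ) := h6
        exact le_of_mul_le_mul_right h6' hN0
      have h8 : x^t ≤ 6*(t:ℝ)*x^t := by
        have := le_mul_of_one_le_left (pow_nonneg hx0 t) (by linarith : (1:ℝ) ≤ 6*(t:ℝ))
        calc x^t ≤ (6*(t:ℝ))*x^t := this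
          _ = 6*(t:ℝ)*x^t := by ring
      linarith
    have hxle : x ≤ (n:ℝ) ^ ((1:ℝ)/(t:ℝ)) := by
      have h1 : x = (x ^ t) ^ ((1:ℝ)/(t:ℝ)) := by
        rw [← Real.rpow_natCast x t, ← Real.rpow_mul hx0]
        rw [mul_one_div, div_self (ne_of_gt hT0), Real.rpow_one]
      rw [h1]
      exact Real.rpow_le_rpow (pow_nonneg hx0 t) hxt (div_nonneg zero_le_one hT0.le)
    calc 2*(E:ℝ)/(n:ℝ) = 8*(t:ℝ)*x := by
          rw [hDx]; field_simp
      _ ≤ 8*(t:ℝ)*((n:ℝ) ^ ((1:ℝ)/(t:ℝ))) := by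
          have : (0:ℝ) ≤ 8*(t:ℝ) := by positivity
          exact mul_le_mul_of_nonneg_left hxle this
      _ = 4*(s:ℝ)*((n:ℝ) ^ ((2:ℝ)/(s:ℝ))) := by
          rw [hexp, hsT]; ring
end

section
/- Every s-parallel-greedy graph on n vertices has arboricity at most C·s·n^{2/s} for an absolute constant C. -/
set_option linter.unusedSectionVars false
set_option linter.unusedVariables false
set_option maxHeartbeats 1000000

open SimpleGraph

/-- `G` can be covered by `α` forests, i.e. `G` has arboricity at most `α`. -/
def HasForestCover {V : Type*} (G : SimpleGraph V) (α : ℕ) : Prop :=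
  ∃ F : Fin α → SimpleGraph V, (∀ i, F i ≤ G) ∧ (∀ i, (F i).IsAcyclic) ∧
    ∀ e ∈ G.edgeSet, ∃ i, e ∈ (F i).edgeSet

open scoped Classical

namespace PGproof

variable {V : Type} [Fintype V] {G : SimpleGraph V} {s k : ℕ} {M : Fin k → SimpleGraph V}

section Core
variable (M)

/-- `x` is matched at time `i`. -/
def matched (x : V) (i : Fin k) : Prop := ∃ y, (M i).Adj x y

noncomputable def partner (x : V) (i : Fin k) : V :=
  if h : matched M x i then h.choose else x

variable {M}

lemma partner_adj {x : V} {i : Fin k} (h : matched M x i) :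
    (M i).Adj x (partner M x i) := by
  rw [partner, dif_pos h]; exact h.choose_spec

lemma partner_eq (hmatch : ∀ i, ∀ v u w : V, (M i).Adj v u → (M i).Adj v w → u = w)
    {x y : V} {i : Fin k} (h : (M i).Adj x y) : partner M x i = y :=
  hmatch i x _ y (partner_adj ⟨y, h⟩) h

lemma partner_partner (hmatch : ∀ i, ∀ v u w : V, (M i).Adj v u → (M i).Adj v w → u = w)
    {x : V} {i : Fin k} (h : matched M x i) :
    partner M (partner M x i) i = x :=
  partner_eq hmatch (partner_adj h).symm

variable (M)

/-- `Ok x L` : `L` is a valid strictly time-decreasing walk specification from `x`. -/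
def Ok (x : V) : List (Fin k) → Prop
  | [] => True
  | i :: t => matched M x i ∧ (∀ j ∈ t, j < i) ∧ Ok (partner M x i) t

/-- endpoint of the decreasing walk. -/
noncomputable def ep (x : V) : List (Fin k) → V
  | [] => x
  | i :: t => ep (partner M x i) t

variable {M}

@[simp] lemma Ok_nil (x : V) : Ok M x [] := trivial
@[simp] lemma ep_nil (x : V) : ep M x [] = x := rfl

/-- The earlier graph at time `i`. -/
def Gsup (M : Fin k → SimpleGraph V) (i : Fin k) : SimpleGraph V := ⨆ j : {j : Fin k // j < i}, M j.1

lemma adj_Gsup {i j : Fin k} (hj : j < i) {a b : V} (h : (M j).Adj a b) :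
    (Gsup M i).Adj a b := by
  have : M j ≤ Gsup M i := le_iSup (fun j : {j : Fin k // j < i} => M j.1) ⟨j, hj⟩
  exact this h

/-- From a valid decreasing list with all times `< i` we get a walk in the earlier graph. -/
lemma walk_of_Ok {x : V} {L : List (Fin k)} (hOk : Ok M x L) {i : Fin k}
    (hlt : ∀ j ∈ L, j < i) :
    ∃ p : (Gsup M i).Walk x (ep M x L), p.length = L.length := by
  induction L generalizing x with
  | nil => exact ⟨Walk.nil, rfl⟩
  | cons j t ih =>
      obtain ⟨hm, hdec, hok⟩ := hOk
      obtain ⟨p, hp⟩ := ih hok (fun a ha => hlt a (List.mem_cons_of_mem _ ha))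
      refine ⟨Walk.cons (adj_Gsup (hlt j List.mem_cons_self) (partner_adj hm)) p, ?_⟩
      exact congrArg (· + 1) hp


end Core

section Inj
variable (hmatch : ∀ i, ∀ v u w : V, (M i).Adj v u → (M i).Adj v w → u = w)
variable (hdist : ∀ i : Fin k, ∀ u v : V, (M i).Adj u v →
    ∀ p : (Gsup M i).Walk u v, s < p.length)

include hmatch hdist in
/-- Two decreasing walks from the same vertex with the same endpoint are equal. -/
lemma ep_inj : ∀ (L₁ L₂ : List (Fin k)) (x : V), Ok M x L₁ → Ok M x L₂ →
    L₁.length + L₂.length ≤ s + 1 → ep M x L₁ = ep M x L₂ → L₁ = L₂ := by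
  intro L₁
  induction L₁ with
  | nil =>
      rintro (_ | ⟨i, t⟩) x _ hok₂ hlen hep
      · rfl
      · exfalso
        obtain ⟨hm, hdec, hok⟩ := hok₂
        obtain ⟨p, hp⟩ := walk_of_Ok hok hdec
        have hep' : ep M (partner M x i) t = x := hep.symm
        have := hdist i x (partner M x i) (partner_adj hm) ((p.copy rfl hep').reverse)
        rw [Walk.length_reverse, Walk.length_copy, hp] at this
        simp only [List.length_nil, List.length_cons] at hlen
        omega
  | cons i₁ t₁ ih =>
      rintro (_ | ⟨i₂, t₂⟩) x hok₁ hok₂ hlen hep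
      · exfalso
        obtain ⟨hm, hdec, hok⟩ := hok₁
        obtain ⟨p, hp⟩ := walk_of_Ok hok hdec
        have hep' : ep M (partner M x i₁) t₁ = x := hep
        have := hdist i₁ x (partner M x i₁) (partner_adj hm) ((p.copy rfl hep').reverse)
        rw [Walk.length_reverse, Walk.length_copy, hp] at this
        simp only [List.length_cons, List.length_nil] at hlen
        omega
      · obtain ⟨hm₁, hdec₁, hok₁'⟩ := hok₁
        obtain ⟨hm₂, hdec₂, hok₂'⟩ := hok₂
        rcases lt_trichotomy i₁ i₂ with hlt | heq | hlt
        · -- i₁ < i₂ : contradiction at edge (x, partner x i₂)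
          exfalso
          obtain ⟨pA, hA⟩ := walk_of_Ok hok₂' hdec₂
          -- walk B : x → ep along L₁ = i₁ :: t₁, all times < i₂
          have hdecB : ∀ j ∈ (i₁ :: t₁), j < i₂ := by
            intro j hj
            rcases List.mem_cons.mp hj with h | h
            · exact h ▸ hlt
            · exact lt_trans (hdec₁ j h) hlt
          obtain ⟨pB, hB⟩ := walk_of_Ok (show Ok M x (i₁ :: t₁) from ⟨hm₁, hdec₁, hok₁'⟩) hdecB
          have := hdist i₂ x (partner M x i₂) (partner_adj hm₂) ((pB.copy rfl hep).append pA.reverse)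
          erw [Walk.length_append, Walk.length_reverse, Walk.length_copy, hA, hB] at this
          simp only [List.length_cons] at hlen this
          omega
        · subst heq
          have : t₁ = t₂ := by
            refine ih t₂ (partner M x i₁) hok₁' hok₂' ?_ hep
            simp only [List.length_cons] at hlen
            omega
          rw [this]
        · -- i₂ < i₁ : contradiction at edge (x, partner x i₁)
          exfalso
          obtain ⟨pA, hA⟩ := walk_of_Ok hok₁' hdec₁
          have hdecB : ∀ j ∈ (i₂ :: t₂), j < i₁ := by
            intro j hj
            rcases List.mem_cons.mp hj with h | h
            · exact h ▸ hlt
            · exact lt_trans (hdec₂ j h) hlt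
          obtain ⟨pB, hB⟩ := walk_of_Ok (show Ok M x (i₂ :: t₂) from ⟨hm₂, hdec₂, hok₂'⟩) hdecB
          have := hdist i₁ x (partner M x i₁) (partner_adj hm₁) ((pB.copy rfl hep.symm).append pA.reverse)
          erw [Walk.length_append, Walk.length_reverse, Walk.length_copy, hA, hB] at this
          simp only [List.length_cons] at hlen this
          omega

end Inj

section Alive
variable (M) in
/-- `alive q ρ x i` : from vertex `x` just before time `i` there is a full `q`-ary tree of
decreasing walks of depth `ρ`. -/
def alive (q : ℕ) : ℕ → V → Fin k → Prop
  | 0, x, i => matched M x i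
  | (ρ+1), x, i => matched M x i ∧
      q ≤ (Finset.univ.filter
        (fun j : Fin k => j < i ∧ matched M x j ∧ alive q ρ (partner M x j) j)).card

lemma alive_matched {q ρ : ℕ} {x : V} {i : Fin k} (h : alive M q ρ x i) : matched M x i := by
  cases ρ with
  | zero => exact h
  | succ ρ => exact h.1

lemma alive_walks {q : ℕ} : ∀ (ρ : ℕ) (x : V) (i : Fin k), alive M q ρ x i →
    ∃ S : Finset (List (Fin k)),
      (∀ L ∈ S, Ok M x L ∧ L.length = ρ ∧ ∀ j ∈ L, j < i) ∧ q ^ ρ ≤ S.card := by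
  intro ρ
  induction ρ with
  | zero =>
      intro x i _
      exact ⟨{[]}, by simp, by simp⟩
  | succ ρ ih =>
      intro x i ha
      obtain ⟨hm, hcard⟩ := ha
      set T := Finset.univ.filter
        (fun j : Fin k => j < i ∧ matched M x j ∧ alive M q ρ (partner M x j) j) with hT
      have H : ∀ j : Fin k, ∃ Sj : Finset (List (Fin k)),
          j ∈ T → ((∀ L ∈ Sj, Ok M (partner M x j) L ∧ L.length = ρ ∧ ∀ a ∈ L, a < j)
            ∧ q ^ ρ ≤ Sj.card) := by
        intro j
        by_cases hj : j ∈ T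
        · obtain ⟨hji, hjm, hja⟩ := (Finset.mem_filter.mp hj).2
          obtain ⟨Sj, h1, h2⟩ := ih (partner M x j) j hja
          exact ⟨Sj, fun _ => ⟨h1, h2⟩⟩
        · exact ⟨∅, fun h => absurd h hj⟩
      choose F hF using H
      refine ⟨T.biUnion (fun j => (F j).image (fun L => j :: L)), ?_, ?_⟩
      · intro L hL
        obtain ⟨j, hjT, hLmem⟩ := Finset.mem_biUnion.mp hL
        obtain ⟨L', hL', rfl⟩ := Finset.mem_image.mp hLmem
        obtain ⟨hji, hjm, hja⟩ := (Finset.mem_filter.mp hjT).2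
        obtain ⟨h1, h2, h3⟩ := (hF j hjT).1 L' hL'
        refine ⟨⟨hjm, h3, h1⟩, by simp [h2], ?_⟩
        intro a ha
        rcases List.mem_cons.mp ha with rfl | ha'
        · exact hji
        · exact lt_trans (h3 a ha') hji
      · have hdisj' : ∀ a ∈ T, ∀ b ∈ T, a ≠ b →
            Disjoint ((F a).image (fun L => a :: L)) ((F b).image (fun L => b :: L)) := by
          intro a _ b _ hab
          refine Finset.disjoint_left.mpr ?_
          rintro L hLa hLb
          obtain ⟨La, _, rfl⟩ := Finset.mem_image.mp hLa
          obtain ⟨Lb, _, hEq⟩ := Finset.mem_image.mp hLb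
          exact hab (List.cons.inj hEq.symm).1
        rw [Finset.card_biUnion hdisj']
        have : ∀ j ∈ T, q ^ ρ ≤ ((F j).image (fun L => j :: L)).card := by
          intro j hj
          rw [Finset.card_image_of_injective _ (fun a b h => by injection h)]
          exact (hF j hj).2
        calc q ^ (ρ + 1) = q * q ^ ρ := by ring
        _ ≤ T.card * q ^ ρ := Nat.mul_le_mul_right _ hcard
        _ = ∑ _j ∈ T, q ^ ρ := by rw [Finset.sum_const, smul_eq_mul]
        _ ≤ ∑ j ∈ T, ((F j).image (fun L => j :: L)).card := Finset.sum_le_sum this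

end Alive

section Count
variable (M) in
/-- number of times at which `x` is matched; equals the degree of `x` in `G`. -/
noncomputable def degM (x : V) : ℕ := (Finset.univ.filter (fun i : Fin k => matched M x i)).card

variable (hmatch : ∀ i, ∀ v u w : V, (M i).Adj v u → (M i).Adj v w → u = w)
variable (hdisj : Pairwise fun i j : Fin k => Disjoint (M i).edgeSet (M j).edgeSet)
variable (hMle : ∀ i, M i ≤ G)
variable (hcov : ∀ e ∈ G.edgeSet, ∃ i, e ∈ (M i).edgeSet)

include hmatch hdisj hMle hcov in
lemma degree_eq_degM (x : V) : G.degree x = degM M x := by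
  rw [← card_neighborFinset_eq_degree, degM]
  symm
  refine Finset.card_bij (fun i _ => partner M x i) ?_ ?_ ?_
  · intro i hi
    have hm := (Finset.mem_filter.mp hi).2
    exact (mem_neighborFinset _ _ _).mpr (hMle i (partner_adj hm))
  · intro i₁ h₁ i₂ h₂ heq
    by_contra hne
    have hm₁ := (Finset.mem_filter.mp h₁).2
    have hm₂ := (Finset.mem_filter.mp h₂).2
    have e₁ : s(x, partner M x i₁) ∈ (M i₁).edgeSet := (partner_adj hm₁)
    have heq' : partner M x i₁ = partner M x i₂ := heq
    have e₂ : s(x, partner M x i₁) ∈ (M i₂).edgeSet := by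
      rw [heq']; exact (partner_adj hm₂)
    exact Set.disjoint_left.mp (hdisj hne) e₁ e₂
  · intro y hy
    have hadj : G.Adj x y := (mem_neighborFinset _ _ _).mp hy
    obtain ⟨i, hi⟩ := hcov _ ((SimpleGraph.mem_edgeSet G).mpr hadj)
    have : (M i).Adj x y := (SimpleGraph.mem_edgeSet (M i)).mp hi
    exact ⟨i, Finset.mem_filter.mpr ⟨Finset.mem_univ _, ⟨y, this⟩⟩, partner_eq hmatch this⟩

variable (M) in
noncomputable def cAlive (q ρ : ℕ) (x : V) : ℕ :=
  (Finset.univ.filter (fun i : Fin k => alive M q ρ x i)).card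

variable (M) in
noncomputable def pAlive (q ρ : ℕ) (x : V) : ℕ :=
  (Finset.univ.filter (fun i : Fin k =>
    matched M x i ∧ alive M q ρ (partner M x i) i)).card

lemma cAlive_zero (x : V) : cAlive M q 0 x = degM M x := rfl

include hmatch in
lemma sum_pAlive_eq (q ρ : ℕ) :
    ∑ x : V, pAlive M q ρ x = ∑ y : V, cAlive M q ρ y := by
  have e1 : ∑ x : V, pAlive M q ρ x = ∑ i : Fin k,
      (Finset.univ.filter (fun x : V => matched M x i ∧ alive M q ρ (partner M x i) i)).card := by
    simp only [pAlive, Finset.card_filter]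
    exact Finset.sum_comm
  have e2 : ∑ y : V, cAlive M q ρ y = ∑ i : Fin k,
      (Finset.univ.filter (fun y : V => alive M q ρ y i)).card := by
    simp only [cAlive, Finset.card_filter]
    exact Finset.sum_comm
  rw [e1, e2]
  refine Finset.sum_congr rfl ?_
  intro i _
  refine Finset.card_bij (fun x _ => partner M x i) ?_ ?_ ?_
  · intro x hx
    exact Finset.mem_filter.mpr ⟨Finset.mem_univ _, (Finset.mem_filter.mp hx).2.2⟩
  · intro x₁ h₁ x₂ h₂ heq
    have heq' : partner M x₁ i = partner M x₂ i := heq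
    have hm₁ := (Finset.mem_filter.mp h₁).2.1
    have hm₂ := (Finset.mem_filter.mp h₂).2.1
    calc x₁ = partner M (partner M x₁ i) i := (partner_partner hmatch hm₁).symm
    _ = partner M (partner M x₂ i) i := by rw [heq']
    _ = x₂ := partner_partner hmatch hm₂
  · intro y hy
    have hay := (Finset.mem_filter.mp hy).2
    have hmy : matched M y i := alive_matched hay
    refine ⟨partner M y i, Finset.mem_filter.mpr ⟨Finset.mem_univ _, ?_, ?_⟩,
      partner_partner hmatch hmy⟩
    · exact ⟨y, (partner_adj hmy).symm⟩
    · rw [partner_partner hmatch hmy]; exact hay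

lemma pAlive_le_cAlive_succ_add (q ρ : ℕ) (x : V) :
    pAlive M q ρ x ≤ cAlive M q (ρ+1) x + q := by
  classical
  set P := Finset.univ.filter (fun i : Fin k =>
    matched M x i ∧ alive M q ρ (partner M x i) i) with hP
  set g : Fin k → ℕ := fun i => (P.filter (· < i)).card with hg
  have hmono : ∀ i₁ ∈ P, ∀ i₂ ∈ P, i₁ < i₂ → g i₁ < g i₂ := by
    intro i₁ h₁ i₂ _ hlt
    have hsub : P.filter (· < i₁) ⊆ P.filter (· < i₂) := by
      intro j hj
      obtain ⟨hjP, hjlt⟩ := Finset.mem_filter.mp hj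
      exact Finset.mem_filter.mpr ⟨hjP, lt_trans hjlt hlt⟩
    have hmem : i₁ ∈ P.filter (· < i₂) := Finset.mem_filter.mpr ⟨h₁, hlt⟩
    have hnmem : i₁ ∉ P.filter (· < i₁) := fun hc => lt_irrefl i₁ (Finset.mem_filter.mp hc).2
    exact Finset.card_lt_card (Finset.ssubset_iff_of_subset hsub |>.mpr ⟨i₁, hmem, hnmem⟩)
  have hinj : ∀ i₁ ∈ P, ∀ i₂ ∈ P, g i₁ = g i₂ → i₁ = i₂ := by
    intro i₁ h₁ i₂ h₂ heq
    rcases lt_trichotomy i₁ i₂ with h | h | h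
    · exact absurd heq (Nat.ne_of_lt (hmono _ h₁ _ h₂ h))
    · exact h
    · exact absurd heq.symm (Nat.ne_of_lt (hmono _ h₂ _ h₁ h))
  have hbad : (P.filter (fun i => ¬ q ≤ g i)).card ≤ q := by
    have hmapsto : ∀ i ∈ P.filter (fun i => ¬ q ≤ g i), g i ∈ Finset.range q := by
      intro i hi
      exact Finset.mem_range.mpr (Nat.lt_of_not_le (Finset.mem_filter.mp hi).2)
    have hinj' : ∀ i₁ ∈ P.filter (fun i => ¬ q ≤ g i), ∀ i₂ ∈ P.filter (fun i => ¬ q ≤ g i),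
        g i₁ = g i₂ → i₁ = i₂ := fun i₁ h₁ i₂ h₂ heq =>
      hinj _ (Finset.mem_filter.mp h₁).1 _ (Finset.mem_filter.mp h₂).1 heq
    calc (P.filter (fun i => ¬ q ≤ g i)).card ≤ (Finset.range q).card :=
          Finset.card_le_card_of_injOn g hmapsto hinj'
    _ = q := Finset.card_range q
  have hgood : P.filter (fun i => q ≤ g i)
      ⊆ Finset.univ.filter (fun i : Fin k => alive M q (ρ+1) x i) := by
    intro i hi
    obtain ⟨hiP, hq⟩ := Finset.mem_filter.mp hi
    obtain ⟨hm, -⟩ := (Finset.mem_filter.mp hiP).2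
    refine Finset.mem_filter.mpr ⟨Finset.mem_univ _, hm, ?_⟩
    refine le_trans hq (Finset.card_le_card ?_)
    intro j hj
    obtain ⟨hjP, hjlt⟩ := Finset.mem_filter.mp hj
    obtain ⟨hjm, hja⟩ := (Finset.mem_filter.mp hjP).2
    exact Finset.mem_filter.mpr ⟨Finset.mem_univ _, hjlt, hjm, hja⟩
  have hsplit := Finset.card_filter_add_card_filter_not
    (s := P) (p := fun i => q ≤ g i)
  have hgc := Finset.card_le_card hgood
  have : pAlive M q ρ x = P.card := rfl
  have hca : cAlive M q (ρ+1) x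
      = (Finset.univ.filter (fun i : Fin k => alive M q (ρ+1) x i)).card := rfl
  omega

include hmatch in
lemma exists_alive (q R : ℕ)
    (hdeg : ∀ x : V, 0 < degM M x → R * q + 1 ≤ degM M x)
    (hne : ∃ x, 0 < degM M x) :
    ∃ (x : V) (i : Fin k), alive M q R x i := by
  classical
  set S := Finset.univ.filter (fun x : V => 0 < degM M x) with hS
  obtain ⟨x₀, hx₀⟩ := hne
  have hx₀S : x₀ ∈ S := Finset.mem_filter.mpr ⟨Finset.mem_univ _, hx₀⟩
  have hN : 1 ≤ S.card := Finset.card_pos.mpr ⟨x₀, hx₀S⟩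
  have hstep : ∀ ρ : ℕ, ∑ x : V, cAlive M q ρ x
      ≤ ∑ x : V, cAlive M q (ρ+1) x + q * S.card := by
    intro ρ
    rw [← sum_pAlive_eq hmatch q ρ]
    have hvanish : ∀ x ∈ Finset.univ, x ∉ S → pAlive M q ρ x = 0 := by
      intro x _ hx
      have hdeg0 : degM M x = 0 := by
        by_contra h
        exact hx (Finset.mem_filter.mpr ⟨Finset.mem_univ _, Nat.pos_of_ne_zero h⟩)
      have hsub : Finset.univ.filter (fun i : Fin k =>
          matched M x i ∧ alive M q ρ (partner M x i) i)
          ⊆ Finset.univ.filter (fun i : Fin k => matched M x i) := by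
        intro i hi
        exact Finset.mem_filter.mpr ⟨Finset.mem_univ _, (Finset.mem_filter.mp hi).2.1⟩
      have := Finset.card_le_card hsub
      unfold pAlive
      unfold degM at hdeg0
      omega
    have hrestrict : ∑ x : V, pAlive M q ρ x = ∑ x ∈ S, pAlive M q ρ x :=
      (Finset.sum_subset (Finset.subset_univ S) hvanish).symm
    rw [hrestrict]
    calc ∑ x ∈ S, pAlive M q ρ x ≤ ∑ x ∈ S, (cAlive M q (ρ+1) x + q) :=
          Finset.sum_le_sum (fun x _ => pAlive_le_cAlive_succ_add q ρ x)
    _ = ∑ x ∈ S, cAlive M q (ρ+1) x + q * S.card := by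
          rw [Finset.sum_add_distrib, Finset.sum_const, smul_eq_mul, mul_comm]
    _ ≤ ∑ x : V, cAlive M q (ρ+1) x + q * S.card := by
          have : ∑ x ∈ S, cAlive M q (ρ+1) x ≤ ∑ x : V, cAlive M q (ρ+1) x :=
            Finset.sum_le_sum_of_subset (Finset.subset_univ S)
          omega
  have htel : ∀ ρ : ℕ, ∑ x : V, cAlive M q 0 x
      ≤ ∑ x : V, cAlive M q ρ x + ρ * (q * S.card) := by
    intro ρ
    induction ρ with
    | zero => simp
    | succ ρ ih =>
        have := hstep ρ
        have harith : (ρ+1) * (q * S.card) = ρ * (q * S.card) + q * S.card := by ring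
        omega
  have hbase : S.card * (R * q + 1) ≤ ∑ x : V, cAlive M q 0 x := by
    calc S.card * (R * q + 1) = ∑ _x ∈ S, (R * q + 1) := by
          rw [Finset.sum_const, smul_eq_mul]
    _ ≤ ∑ x ∈ S, degM M x := by
          refine Finset.sum_le_sum ?_
          intro x hx
          exact hdeg x (Finset.mem_filter.mp hx).2
    _ ≤ ∑ x : V, degM M x := Finset.sum_le_sum_of_subset (Finset.subset_univ S)
    _ = ∑ x : V, cAlive M q 0 x := by rfl
  have hfin : 1 ≤ ∑ x : V, cAlive M q R x := by
    have h1 := htel R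
    have h2 : R * (q * S.card) + S.card ≤ S.card * (R * q + 1) := by
      have : R * (q * S.card) = S.card * (R * q) := by ring
      nlinarith [hN]
    omega
  have : ∃ x : V, 0 < cAlive M q R x := by
    by_contra h
    push_neg at h
    have : ∑ x : V, cAlive M q R x = 0 := by
      refine Finset.sum_eq_zero ?_
      intro x _
      exact Nat.le_zero.mp (h x)
    omega
  obtain ⟨x, hx⟩ := this
  have : (Finset.univ.filter (fun i : Fin k => alive M q R x i)).Nonempty :=
    Finset.card_pos.mp hx
  obtain ⟨i, hi⟩ := this
  exact ⟨x, i, (Finset.mem_filter.mp hi).2⟩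

include hmatch hdisj hMle hcov in
/-- The central counting bound: a parallel-greedy graph of minimum positive degree
`R*q+1` has at least `q^R` vertices. -/
lemma main_card_bound {q R : ℕ} (h2R : 2 * R ≤ s + 1)
    (hdist : ∀ i : Fin k, ∀ u v : V, (M i).Adj u v →
      ∀ p : (Gsup M i).Walk u v, s < p.length)
    (hdeg : ∀ x : V, 0 < G.degree x → R * q + 1 ≤ G.degree x)
    (hne : G.edgeSet.Nonempty) : q ^ R ≤ Fintype.card V := by
  classical
  have hdeg' : ∀ x : V, 0 < degM M x → R * q + 1 ≤ degM M x := by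
    intro x hx
    rw [← degree_eq_degM hmatch hdisj hMle hcov] at hx ⊢
    exact hdeg x hx
  have hne' : ∃ x, 0 < degM M x := by
    obtain ⟨e, he⟩ := hne
    induction e with
    | _ a b =>
        have hadj : G.Adj a b := (SimpleGraph.mem_edgeSet G).mp he
        obtain ⟨i, hi⟩ := hcov _ he
        refine ⟨a, Finset.card_pos.mpr ⟨i, Finset.mem_filter.mpr
          ⟨Finset.mem_univ _, ⟨b, (SimpleGraph.mem_edgeSet (M i)).mp hi⟩⟩⟩⟩
  obtain ⟨x, i, ha⟩ := exists_alive hmatch q R hdeg' hne'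
  obtain ⟨S, hS, hcard⟩ := alive_walks R x i ha
  have hinj : ∀ L₁ ∈ S, ∀ L₂ ∈ S, ep M x L₁ = ep M x L₂ → L₁ = L₂ := by
    intro L₁ h₁ L₂ h₂ hep
    obtain ⟨hok₁, hlen₁, -⟩ := hS L₁ h₁
    obtain ⟨hok₂, hlen₂, -⟩ := hS L₂ h₂
    refine ep_inj hmatch hdist L₁ L₂ x hok₁ hok₂ ?_ hep
    omega
  calc q ^ R ≤ S.card := hcard
  _ ≤ Finset.univ.card := Finset.card_le_card_of_injOn (ep M x)
        (fun L _ => Finset.mem_univ _) hinj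
  _ = Fintype.card V := Finset.card_univ

end Count

/-- Adding a pendant edge at an isolated vertex keeps a graph acyclic. -/
lemma pendant_acyclic {H : SimpleGraph V} (hH : H.IsAcyclic) {v u : V}
    (hiso : ∀ y, ¬ H.Adj v y) (hvu : v ≠ u) :
    (H ⊔ fromEdgeSet {s(v, u)}).IsAcyclic := by
  classical
  intro a c hc
  -- every H'-adjacency at v goes to u
  have hvadj : ∀ y, (H ⊔ fromEdgeSet {s(v, u)}).Adj v y → y = u := by
    intro y hy
    rcases (sup_adj _ _ _ _).mp hy with h | h
    · exact absurd h (hiso y)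
    · obtain ⟨hmem, -⟩ := (fromEdgeSet_adj _).mp h
      rw [Set.mem_singleton_iff] at hmem
      exact Sym2.congr_right.mp hmem
  by_cases hmem : s(v, u) ∈ c.edges
  · -- rotate the cycle to start at `v`
    have hvsup : v ∈ c.support := c.fst_mem_support_of_mem_edges hmem
    have hc' := hc.rotate hvsup
    set c' := c.rotate v hvsup with hcdef
    cases hce : c' with
    | nil => rw [hce] at hc'; exact hc'.ne_nil rfl
    | cons h q =>
        rename_i b
        rw [hce] at hc'
        have hb : b = u := hvadj b h
        cases hqr : q.reverse with
        | nil =>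
            exfalso
            have : q.reverse.length = 0 := by rw [hqr]; rfl
            rw [Walk.length_reverse] at this
            have h3 := hc'.three_le_length
            simp only [Walk.length_cons] at h3
            omega
        | cons h₂ q₂ =>
            rename_i y
            have hy : y = u := hvadj y h₂
            have hmem₂ : s(v, y) ∈ q.edges := by
              have : s(v, y) ∈ q.reverse.edges := by
                rw [hqr]; exact List.mem_cons_self
              rw [Walk.edges_reverse] at this
              exact List.mem_reverse.mp this
            have hnodup := hc'.edges_nodup
            simp only [Walk.edges_cons, List.nodup_cons] at hnodup
            exact hnodup.1 ((show s(v,b) = s(v,y) by rw [hb, hy]) ▸ hmem₂)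
  · -- transfer the cycle to `H`
    have hsub : ∀ e ∈ c.edges, e ∈ H.edgeSet := by
      intro e he
      have := c.edges_subset_edgeSet he
      rw [edgeSet_sup] at this
      rcases this with h | h
      · exact h
      · exfalso
        rw [edgeSet_fromEdgeSet] at h
        obtain ⟨h1, -⟩ := h
        rw [Set.mem_singleton_iff] at h1
        exact hmem (h1 ▸ he)
    exact hH (c.transfer H hsub) (hc.transfer hsub)


lemma delete_PG {G : SimpleGraph V} {s k : ℕ} {M : Fin k → SimpleGraph V}
    (hPG : IsParallelGreedy G s k M) (v : V) :
    IsParallelGreedy (G.deleteEdges {e | v ∈ e}) s k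
      (fun i => (M i).deleteEdges {e | v ∈ e}) := by
  obtain ⟨h1, h2, h3, h4, h5⟩ := hPG
  refine ⟨?_, ?_, ?_, ?_, ?_⟩
  · intro i a b hab
    rw [deleteEdges_adj] at hab ⊢
    exact ⟨h1 i hab.1, hab.2⟩
  · intro e he
    rw [edgeSet_deleteEdges] at he
    obtain ⟨i, hi⟩ := h2 e he.1
    exact ⟨i, by rw [edgeSet_deleteEdges]; exact ⟨hi, he.2⟩⟩
  · intro i j hij
    have := h3 hij
    rw [edgeSet_deleteEdges, edgeSet_deleteEdges]
    exact this.mono Set.diff_subset Set.diff_subset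
  · intro i x a b ha hb
    rw [deleteEdges_adj] at ha hb
    exact h4 i x a b ha.1 hb.1
  · intro i a b hab p
    rw [deleteEdges_adj] at hab
    have hle : (⨆ j : {j : Fin k // j < i}, ((M j.1).deleteEdges {e | v ∈ e}))
        ≤ ⨆ j : {j : Fin k // j < i}, M j.1 :=
      iSup_mono (fun j => deleteEdges_le _)
    have hlen : (p.mapLe hle).length = p.length := by simp [Walk.mapLe]
    have := h5 i a b hab.1 (p.mapLe hle)
    omega

lemma empty_cover {G : SimpleGraph V} (h : G.edgeSet = ∅) (D : ℕ) : HasForestCover G D := by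
  refine ⟨fun _ => ⊥, fun _ => bot_le, fun _ => isAcyclic_bot, ?_⟩
  intro e he
  rw [h] at he
  exact absurd he (Set.notMem_empty e)

lemma cover_ind {s : ℕ} (D : ℕ)
    (hdeg : ∀ (k : ℕ) (M : Fin k → SimpleGraph V) (G : SimpleGraph V),
      IsParallelGreedy G s k M → G.edgeSet.Nonempty →
      ∃ w : V, 0 < G.degree w ∧ G.degree w ≤ D) :
    ∀ (m : ℕ) (G : SimpleGraph V) (k : ℕ) (M : Fin k → SimpleGraph V),
      IsParallelGreedy G s k M → G.edgeFinset.card ≤ m → HasForestCover G D := by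
  intro m
  induction m with
  | zero =>
      intro G k M _ hcard
      refine empty_cover ?_ D
      have : G.edgeFinset = ∅ := Finset.card_eq_zero.mp (Nat.le_zero.mp hcard)
      ext e
      simp only [Set.mem_empty_iff_false, iff_false]
      intro he
      have : e ∈ G.edgeFinset := mem_edgeFinset.mpr he
      simp_all
  | succ m ih =>
      intro G k M hPG hcard
      by_cases hE : G.edgeSet.Nonempty
      · obtain ⟨w, hw0, hwD⟩ := hdeg k M G hPG hE
        set G' := G.deleteEdges {e | w ∈ e} with hG'
        -- w has a neighbor
        have hnb : (G.neighborFinset w).Nonempty := by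
          rw [← Finset.card_pos, card_neighborFinset_eq_degree]
          exact hw0
        obtain ⟨y, hy⟩ := hnb
        have hyadj : G.Adj w y := (mem_neighborFinset _ _ _).mp hy
        have hwy_mem : s(w, y) ∈ G.edgeFinset := mem_edgeFinset.mpr hyadj
        have hwy_not : s(w, y) ∉ G'.edgeFinset := by
          rw [mem_edgeFinset, hG', edgeSet_deleteEdges]
          rintro ⟨-, hmem⟩
          exact hmem (Sym2.mem_mk_left w y)
        have hss : G'.edgeFinset ⊂ G.edgeFinset := by
          refine (Finset.ssubset_iff_of_subset (edgeFinset_mono (deleteEdges_le _))).mpr ?_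
          exact ⟨s(w, y), hwy_mem, hwy_not⟩
        have hcard' : G'.edgeFinset.card ≤ m := by
          have := Finset.card_lt_card hss
          omega
        obtain ⟨F', hF'le, hF'ac, hF'cov⟩ :=
          ih G' k (fun i => (M i).deleteEdges {e | w ∈ e}) (delete_PG hPG w) (by convert hcard')
        -- index the neighbors of w
        have hDle : (G.neighborFinset w).card ≤ D := by
          rw [card_neighborFinset_eq_degree]; exact hwD
        set nbrs := G.neighborFinset w with hnbrs
        set f : {x // x ∈ nbrs} → Fin D := fun u => Fin.castLE hDle (nbrs.equivFin u) with hf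
        have hfinj : Function.Injective f := by
          intro u₁ u₂ h
          have : (nbrs.equivFin u₁ : Fin nbrs.card) = nbrs.equivFin u₂ := by
            rw [hf] at h
            exact Fin.castLE_injective hDle h
          exact nbrs.equivFin.injective this
        set F : Fin D → SimpleGraph V := fun i => F' i ⊔
          fromEdgeSet {e | ∃ u : {x // x ∈ nbrs}, f u = i ∧ e = s(w, u.1)} with hF
        have hwiso : ∀ i, ∀ z, ¬ (F' i).Adj w z := by
          intro i z hz
          have := hF'le i hz
          rw [hG', deleteEdges_adj] at this
          exact this.2 (Sym2.mem_mk_left w z)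
        refine ⟨F, ?_, ?_, ?_⟩
        · intro i
          refine sup_le (le_trans (hF'le i) (deleteEdges_le _)) ?_
          intro a b hab
          obtain ⟨⟨u, -, he⟩, -⟩ := (fromEdgeSet_adj _).mp hab
          rcases Sym2.eq_iff.mp he with ⟨rfl, rfl⟩ | ⟨rfl, rfl⟩
          · exact (mem_neighborFinset _ _ _).mp u.2
          · exact ((mem_neighborFinset _ _ _).mp u.2).symm
        · intro i
          by_cases hex : ∃ u : {x // x ∈ nbrs}, f u = i
          · obtain ⟨u₀, hu₀⟩ := hex
            have hset : {e | ∃ u : {x // x ∈ nbrs}, f u = i ∧ e = s(w, u.1)}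
                = {s(w, u₀.1)} := by
              ext e
              constructor
              · rintro ⟨u, hu, rfl⟩
                have : u = u₀ := hfinj (hu.trans hu₀.symm)
                rw [this]; rfl
              · rintro rfl
                exact ⟨u₀, hu₀, rfl⟩
            have : F i = F' i ⊔ fromEdgeSet {s(w, u₀.1)} := by simp only [hF]; rw [hset]
            rw [this]
            exact pendant_acyclic (hF'ac i) (hwiso i)
              (((mem_neighborFinset _ _ _).mp u₀.2).ne)
          · have hset : {e | ∃ u : {x // x ∈ nbrs}, f u = i ∧ e = s(w, u.1)}
                = (∅ : Set (Sym2 V)) := by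
              ext e
              simp only [Set.mem_empty_iff_false, iff_false, Set.mem_setOf_eq]
              rintro ⟨u, hu, -⟩
              exact hex ⟨u, hu⟩
            have : F i = F' i := by simp only [hF]; rw [hset, fromEdgeSet_empty, sup_bot_eq]
            rw [this]
            exact hF'ac i
        · intro e he
          by_cases hwe : w ∈ e
          · induction e with
            | _ a b =>
                have hadj : G.Adj a b := (SimpleGraph.mem_edgeSet G).mp he
                rcases Sym2.mem_iff.mp hwe with rfl | rfl
                · -- e = s(w, b)
                  have hb : b ∈ nbrs := (mem_neighborFinset _ _ _).mpr hadj
                  refine ⟨f ⟨b, hb⟩, ?_⟩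
                  rw [hF]
                  simp only [edgeSet_sup, Set.mem_union]
                  right
                  rw [edgeSet_fromEdgeSet]
                  refine ⟨⟨⟨b, hb⟩, rfl, rfl⟩, ?_⟩
                  simp only [Set.mem_setOf_eq, Sym2.mem_diagSet, Sym2.isDiag_iff_proj_eq]
                  exact hadj.ne
                · -- e = s(a, w)
                  have ha : a ∈ nbrs := (mem_neighborFinset _ _ _).mpr hadj.symm
                  refine ⟨f ⟨a, ha⟩, ?_⟩
                  rw [hF]
                  simp only [edgeSet_sup, Set.mem_union]
                  right
                  rw [edgeSet_fromEdgeSet]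
                  refine ⟨⟨⟨a, ha⟩, rfl, Sym2.eq_swap⟩, ?_⟩
                  simp only [Set.mem_setOf_eq, Sym2.mem_diagSet, Sym2.isDiag_iff_proj_eq]
                  exact hadj.ne
          · have he' : e ∈ G'.edgeSet := by
              rw [hG', edgeSet_deleteEdges]
              exact ⟨he, hwe⟩
            obtain ⟨i, hi⟩ := hF'cov e he'
            exact ⟨i, edgeSet_mono (le_sup_left : F' i ≤ F i) hi⟩
      · rw [Set.not_nonempty_iff_eq_empty] at hE
        exact empty_cover hE D


end PGproof

open PGproof

/-- There is an absolute constant `C` such that every `s`-parallel-greedy graph on `n`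
vertices has arboricity at most `C·s·n^(2/s)`. -/
theorem parallel_greedy_arboricity :
    ∃ C : ℝ, 0 < C ∧
      ∀ (V : Type) [Fintype V] (G : SimpleGraph V)
        (s k : ℕ) (M : Fin k → SimpleGraph V), IsParallelGreedy G s k M → 2 ≤ s →
        ∃ α : ℕ, HasForestCover G α ∧
          (α : ℝ) ≤ C * s * (Fintype.card V : ℝ) ^ ((2 : ℝ) / s) := by
  classical
  refine ⟨4, by norm_num, ?_⟩
  intro V _ G s k M hPG hs
  by_cases hn0 : Fintype.card V = 0
  · -- empty vertex type
    have hemp : IsEmpty V := Fintype.card_eq_zero_iff.mp hn0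
    refine ⟨0, ⟨fun i => i.elim0, fun i => i.elim0, fun i => i.elim0, ?_⟩, ?_⟩
    · intro e he
      exfalso
      induction e with
      | _ a b => exact hemp.false a
    · have hc : ((Fintype.card V : ℝ)) = 0 := by rw [hn0]; norm_num
      have hs0 : (0:ℝ) < (s:ℝ) := by exact_mod_cast (show 0 < s by omega)
      rw [hc, Real.zero_rpow (div_ne_zero two_ne_zero (ne_of_gt hs0))]
      norm_num
  · set n := Fintype.card V with hn
    have hn1 : 1 ≤ n := Nat.pos_of_ne_zero hn0
    set R := (s+1)/2 with hR
    have hR1 : 1 ≤ R := by omega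
    have hRs : 2*R ≤ s+1 := by omega
    have hsR : s ≤ 2*R := by omega
    have hex : ∃ q : ℕ, n < q^R :=
      ⟨n+1, lt_of_lt_of_le (Nat.lt_succ_self n) (Nat.le_self_pow (by omega) _)⟩
    set q := Nat.find hex with hq
    have hqspec : n < q^R := Nat.find_spec hex
    have hq1 : 1 ≤ q := by
      rcases Nat.eq_zero_or_pos q with h | h
      · exfalso
        rw [h, Nat.zero_pow (by omega : 0 < R)] at hqspec
        omega
      · exact h
    have hqprev : (q-1)^R ≤ n := by
      have := Nat.find_min hex (show q-1 < q by omega)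
      omega
    set D := R*q with hD
    have hdegP : ∀ (k' : ℕ) (M' : Fin k' → SimpleGraph V) (G' : SimpleGraph V),
        IsParallelGreedy G' s k' M' → G'.edgeSet.Nonempty →
        ∃ w : V, 0 < G'.degree w ∧ G'.degree w ≤ D := by
      intro k' M' G' hPG' hne
      by_contra hcon
      push_neg at hcon
      obtain ⟨h1, h2, h3, h4, h5⟩ := hPG'
      have hdeg' : ∀ x : V, 0 < G'.degree x → R*q+1 ≤ G'.degree x := by
        intro x hx
        have := hcon x hx
        omega
      have hcb := main_card_bound h4 h3 h1 h2 (show 2*R ≤ s+1 from hRs) h5 hdeg' hne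
      rw [← hn] at hcb
      omega
    have hcover := cover_ind D hdegP (G.edgeFinset.card) G k M hPG le_rfl
    refine ⟨D, hcover, ?_⟩
    -- the numeric bound
    have hnR : (1:ℝ) ≤ (n:ℝ) := by exact_mod_cast hn1
    have hRpos : (0:ℝ) < (R:ℝ) := by exact_mod_cast hR1
    have hspos : (0:ℝ) < (s:ℝ) := by
      have : 0 < s := by omega
      exact_mod_cast this
    have hx0 : (0:ℝ) ≤ ((q-1 : ℕ):ℝ) := Nat.cast_nonneg _
    have step1 : ((q-1 : ℕ):ℝ) ≤ (n:ℝ) ^ ((1:ℝ)/R) := by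
      have hxR : ((q-1 : ℕ):ℝ) ^ (R:ℕ) ≤ (n:ℝ) := by exact_mod_cast hqprev
      have h2 := Real.rpow_le_rpow (by positivity) hxR (by positivity : (0:ℝ) ≤ 1/(R:ℝ))
      rw [← Real.rpow_natCast ((q-1 : ℕ):ℝ) R, ← Real.rpow_mul hx0] at h2
      rw [mul_one_div, div_self (ne_of_gt hRpos), Real.rpow_one] at h2
      exact h2
    have step2 : (n:ℝ) ^ ((1:ℝ)/R) ≤ (n:ℝ) ^ ((2:ℝ)/s) := by
      refine Real.rpow_le_rpow_of_exponent_le hnR ?_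
      rw [div_le_div_iff₀ hRpos hspos]
      have : (s:ℝ) ≤ 2*(R:ℝ) := by exact_mod_cast hsR
      linarith
    have step4 : (1:ℝ) ≤ (n:ℝ) ^ ((2:ℝ)/s) := by
      have := Real.rpow_le_rpow_of_exponent_le hnR
        (show (0:ℝ) ≤ (2:ℝ)/s by positivity)
      rw [Real.rpow_zero] at this
      exact this
    have hqcast : (q:ℝ) ≤ (n:ℝ) ^ ((2:ℝ)/s) + 1 := by
      have hsub : ((q-1 : ℕ):ℝ) = (q:ℝ) - 1 := by
        push_cast [Nat.cast_sub hq1]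
        ring
      rw [hsub] at step1
      linarith
    have hDcast : ((D:ℕ):ℝ) = (R:ℝ) * (q:ℝ) := by
      rw [hD]
      push_cast
      ring
    have h2Rc : 2*(R:ℝ) ≤ (s:ℝ)+1 := by exact_mod_cast hRs
    have hs1 : (1:ℝ) ≤ (s:ℝ) := by
      have : 1 ≤ s := by omega
      exact_mod_cast this
    rw [hDcast]
    nlinarith [step4, hqcast, h2Rc, hs1, hRpos,
      mul_le_mul_of_nonneg_left hqcast (le_of_lt hRpos)]
end
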